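/- arXiv:1906.09424 — 11 statements merged into one kernel-verified Lean document; each statement's English description precedes it below -/
import Mathlib

section
/- Let q > 5 be a prime power with q ≡ 0 (mod 4). Then the projective special linear group PSL(2,q) has exactly one non-abelian centralizer, i.e. |nacent(PSL(2,q))| = 1. -/
open Matrix

/-- `cent G` is the set of centralizers of elements of `G`, as subgroups of `G`. -/
def cent (G : Type*) [Group G] : Set (Subgroup G) :=
  Set.range fun g : G => Subgroup.centralizer {g}

/-- `nacent G` is the set of non-abelian centralizers of elements of `G`. -/
def nacent (G : Type*) [Group G] : Set (Subgroup G) :=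
  {C | C ∈ cent G ∧ ¬ IsMulCommutative C}

section aux

variable {F : Type*} [Field F]

/-- Two matrices commuting with a common non-scalar 2×2 matrix commute. -/
lemma comm_of_comm_nonscalar {A B C : Matrix (Fin 2) (Fin 2) F}
    (hns : ¬(A 0 1 = 0 ∧ A 1 0 = 0 ∧ A 0 0 = A 1 1))
    (hB : A * B = B * A) (hC : A * C = C * A) : B * C = C * B := by
  set a := A 0 0 with ha; set b := A 0 1 with hb; set c := A 1 0 with hc; set d := A 1 1 with hd
  set e := B 0 0; set f := B 0 1; set g := B 1 0; set h := B 1 1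
  set i := C 0 0; set j := C 0 1; set k := C 1 0; set l := C 1 1
  have eB1 : a * f + b * h = e * b + f * d := by
    have := congrFun (congrFun hB 0) 1; simpa [Matrix.mul_apply, Fin.sum_univ_two] using this
  have eB2 : c * e + d * g = g * a + h * c := by
    have := congrFun (congrFun hB 1) 0; simpa [Matrix.mul_apply, Fin.sum_univ_two] using this
  have eB0 : a * e + b * g = e * a + f * c := by
    have := congrFun (congrFun hB 0) 0; simpa [Matrix.mul_apply, Fin.sum_univ_two] using this
  have eC1 : a * j + b * l = i * b + j * d := by
    have := congrFun (congrFun hC 0) 1; simpa [Matrix.mul_apply, Fin.sum_univ_two] using this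
  have eC2 : c * i + d * k = k * a + l * c := by
    have := congrFun (congrFun hC 1) 0; simpa [Matrix.mul_apply, Fin.sum_univ_two] using this
  have eC0 : a * i + b * k = i * a + j * c := by
    have := congrFun (congrFun hC 0) 0; simpa [Matrix.mul_apply, Fin.sum_univ_two] using this
  have key : f * k = j * g ∧ (e * j + f * l = i * f + j * h) ∧ (g * i + h * k = k * e + l * g) := by
    by_cases hcz : c = 0
    · by_cases hbz : b = 0
      · have had : a ≠ d := fun hadeq => hns ⟨hb ▸ hbz, hc ▸ hcz, ha ▸ hd ▸ hadeq⟩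
        have hf : f = 0 := by
          have : f * (a - d) = 0 := by linear_combination eB1 - h * hbz + e * hbz
          rcases mul_eq_zero.mp this with h' | h'
          · exact h'
          · exact absurd (sub_eq_zero.mp h') had
        have hg : g = 0 := by
          have : g * (a - d) = 0 := by linear_combination -eB2 + e * hcz - h * hcz
          rcases mul_eq_zero.mp this with h' | h'
          · exact h'
          · exact absurd (sub_eq_zero.mp h') had
        have hj : j = 0 := by
          have : j * (a - d) = 0 := by linear_combination eC1 - l * hbz + i * hbz
          rcases mul_eq_zero.mp this with h' | h'
          · exact h'
          · exact absurd (sub_eq_zero.mp h') had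
        have hk : k = 0 := by
          have : k * (a - d) = 0 := by linear_combination -eC2 + i * hcz - l * hcz
          rcases mul_eq_zero.mp this with h' | h'
          · exact h'
          · exact absurd (sub_eq_zero.mp h') had
        exact ⟨by rw [hf, hj]; ring, by rw [hf, hj]; ring, by rw [hg, hk]; ring⟩
      · -- b ≠ 0
        have hg' : b * g = f * c := by linear_combination eB0
        have hh2 : b * h = b * e + f * (d - a) := by linear_combination eB1
        have hk' : b * k = j * c := by linear_combination eC0
        have hl2 : b * l = b * i + j * (d - a) := by linear_combination eC1
        have k1 : f * k = j * g := by
          apply mul_left_cancel₀ hbz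
          linear_combination f * hk' - j * hg'
        have k2 : e * j + f * l = i * f + j * h := by
          apply mul_left_cancel₀ hbz
          linear_combination f * hl2 - j * hh2
        have k3 : g * i + h * k = k * e + l * g := by
          apply mul_left_cancel₀ (mul_ne_zero hbz hbz)
          linear_combination (b * i - b * l) * hg' + (b * h - b * e) * hk'
            + c * j * hh2 - c * f * hl2
        exact ⟨k1, k2, k3⟩
    · -- c ≠ 0
      have hf2 : c * f = b * g := by linear_combination -eB0
      have he2 : c * e = c * h + g * (a - d) := by linear_combination eB2
      have hj2 : c * j = b * k := by linear_combination -eC0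
      have hi2 : c * i = c * l + k * (a - d) := by linear_combination eC2
      have k1 : f * k = j * g := by
        apply mul_left_cancel₀ hcz
        linear_combination k * hf2 - g * hj2
      have k3 : g * i + h * k = k * e + l * g := by
        apply mul_left_cancel₀ hcz
        linear_combination g * hi2 - k * he2
      have k2 : e * j + f * l = i * f + j * h := by
        apply mul_left_cancel₀ (mul_ne_zero hcz hcz)
        linear_combination (c * l - c * i) * hf2 + (c * e - c * h) * hj2
          + b * k * he2 - b * g * hi2
      exact ⟨k1, k2, k3⟩
  obtain ⟨k1, k2, k3⟩ := key
  ext x y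
  fin_cases x <;> fin_cases y
  · show (B * C) 0 0 = (C * B) 0 0
    simp only [Matrix.mul_apply, Fin.sum_univ_two]; linear_combination k1
  · show (B * C) 0 1 = (C * B) 0 1
    simp only [Matrix.mul_apply, Fin.sum_univ_two]; linear_combination k2
  · show (B * C) 1 0 = (C * B) 1 0
    simp only [Matrix.mul_apply, Fin.sum_univ_two]; linear_combination k3
  · show (B * C) 1 1 = (C * B) 1 1
    simp only [Matrix.mul_apply, Fin.sum_univ_two]; linear_combination -k1

lemma sq_eq_one_char2 [CharP F 2] {r : F} (hr : r ^ 2 = 1) : r = 1 := by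
  have h2 : (2 : F) = 0 := by exact_mod_cast CharP.cast_eq_zero F 2
  have h0 : (r - 1) ^ 2 = 0 := by linear_combination hr + (1 - r) * h2
  have := pow_eq_zero_iff (n := 2) (by norm_num) |>.mp h0
  exact sub_eq_zero.mp this

lemma center_SL2_char2 [CharP F 2] :
    Subgroup.center (Matrix.SpecialLinearGroup (Fin 2) F) = ⊥ := by
  ext A
  simp only [Subgroup.mem_bot]
  constructor
  · intro hA
    obtain ⟨r, hr, hr'⟩ := Matrix.SpecialLinearGroup.mem_center_iff.mp hA
    have hr1 : r = 1 := sq_eq_one_char2 (by simpa using hr)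
    subst hr1
    have : ((A : Matrix (Fin 2) (Fin 2) F)) = 1 := by rw [← hr']; simp
    exact Subtype.coe_injective this
  · rintro rfl; exact (Subgroup.center _).one_mem

end aux

theorem nacent_psl_two_q_of_mod_four_eq_zero (p k : ℕ) [Fact p.Prime] (hk : k ≠ 0)
    (hq : 5 < p ^ k) (hmod : p ^ k % 4 = 0) :
    (nacent (Matrix.ProjectiveSpecialLinearGroup (Fin 2) (GaloisField p k))).ncard = 1 := by
  have hp2 : p = 2 := by
    have h4 : (2 : ℕ) ∣ p ^ k := dvd_trans (by norm_num) (Nat.dvd_of_mod_eq_zero hmod)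
    have := Nat.Prime.dvd_of_dvd_pow Nat.prime_two h4
    exact ((Nat.prime_dvd_prime_iff_eq Nat.prime_two Fact.out).mp this).symm
  subst hp2
  set F := GaloisField 2 k with hF
  set SL := Matrix.SpecialLinearGroup (Fin 2) F with hSL
  have hcenter : Subgroup.center SL = ⊥ := center_SL2_char2
  set PSL := Matrix.ProjectiveSpecialLinearGroup (Fin 2) F with hPSL
  set π : SL → PSL := QuotientGroup.mk with hπ
  have hπmul : ∀ x y : SL, π (x * y) = π x * π y := fun _ _ => rfl
  have hinj : ∀ x y : SL, π x = π y → x = y := by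
    intro x y hxy
    have := (QuotientGroup.eq (s := Subgroup.center SL)).mp hxy
    rw [hcenter, Subgroup.mem_bot] at this
    exact inv_mul_eq_one.mp this
  have hsurj : ∀ x : PSL, ∃ g : SL, π g = x := fun x => QuotientGroup.mk_surjective x
  have htopcent : Subgroup.centralizer {(1 : PSL)} = ⊤ := by
    ext x; simp [Subgroup.mem_centralizer_singleton_iff]
  have h2z : (2 : F) = 0 := by exact_mod_cast CharP.cast_eq_zero F 2
  have htopnc : ¬ IsMulCommutative (⊤ : Subgroup PSL) := by
    intro hcomm
    set U : SL := ⟨!![1, 1; 0, 1], by simp [Matrix.det_fin_two]⟩ with hU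
    set V : SL := ⟨!![1, 0; 1, 1], by simp [Matrix.det_fin_two]⟩ with hV
    have h1 := hcomm.is_comm.comm ⟨π U, trivial⟩ ⟨π V, trivial⟩
    have h2 : π U * π V = π V * π U := congrArg Subtype.val h1
    have h3 : U * V = V * U := hinj _ _ (by rw [hπmul, hπmul]; exact h2)
    have h5 : ((U * V : SL) : Matrix (Fin 2) (Fin 2) F) 0 0
        = ((V * U : SL) : Matrix (Fin 2) (Fin 2) F) 0 0 := by rw [h3]
    rw [Matrix.SpecialLinearGroup.coe_mul, Matrix.SpecialLinearGroup.coe_mul] at h5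
    simp [hU, hV, Matrix.mul_apply, Fin.sum_univ_two] at h5

  have habel : ∀ x : PSL, x ≠ 1 → IsMulCommutative (Subgroup.centralizer {x}) := by
    intro x hx
    obtain ⟨gx, rfl⟩ := hsurj x
    have hgx : gx ≠ 1 := by rintro rfl; exact hx rfl
    have hns : ¬((gx : Matrix (Fin 2) (Fin 2) F) 0 1 = 0 ∧
        (gx : Matrix (Fin 2) (Fin 2) F) 1 0 = 0 ∧
        (gx : Matrix (Fin 2) (Fin 2) F) 0 0 = (gx : Matrix (Fin 2) (Fin 2) F) 1 1) := by
      rintro ⟨h01, h10, hdiag⟩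
      apply hgx
      have hdet := gx.property
      rw [Matrix.det_fin_two, h01, h10, ← hdiag] at hdet
      have h1 : (gx : Matrix (Fin 2) (Fin 2) F) 0 0 = 1 := by
        apply sq_eq_one_char2; rw [sq]; linear_combination hdet
      apply Subtype.coe_injective
      ext x y
      fin_cases x <;> fin_cases y <;> simp [h01, h10, ← hdiag, h1]
    refine ⟨⟨?_⟩⟩
    rintro ⟨ya, hya⟩ ⟨za, hza⟩
    apply Subtype.ext
    obtain ⟨y, rfl⟩ := hsurj ya
    obtain ⟨z, rfl⟩ := hsurj za
    have hyc : gx * y = y * gx := by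
      apply hinj
      rw [hπmul, hπmul]
      exact (Subgroup.mem_centralizer_singleton_iff.mp hya).symm
    have hzc : gx * z = z * gx := by
      apply hinj
      rw [hπmul, hπmul]
      exact (Subgroup.mem_centralizer_singleton_iff.mp hza).symm
    have hyz : y * z = z * y := by
      apply Subtype.coe_injective
      exact comm_of_comm_nonscalar hns (congrArg Subtype.val hyc) (congrArg Subtype.val hzc)
    show π y * π z = π z * π y
    rw [← hπmul, ← hπmul, hyz]
  have hset : nacent PSL = {⊤} := by
    ext C
    constructor
    · rintro ⟨⟨x, rfl⟩, hnc⟩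
      by_cases hx : x = 1
      · subst hx
        show Subgroup.centralizer {(1 : PSL)} ∈ ({⊤} : Set (Subgroup PSL))
        rw [htopcent]; rfl
      · exact absurd (habel x hx) hnc
    · rintro rfl
      exact ⟨⟨1, htopcent⟩, htopnc⟩
  rw [hset, Set.ncard_singleton]
end

section
/- The dihedral group D₄₀ of order 80 (with 40 rotations) has exactly 22 distinct element centralizers: |cent(DihedralGroup 40)| = 22. -/
abbrev G40 := DihedralGroup 40

def F (g : G40) : Finset G40 := Finset.univ.filter (fun x => x * g = g * x)

lemma coe_F (g : G40) : (↑(F g) : Set G40) = ↑(Subgroup.centralizer {g}) := by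
  ext x
  simp [F, Subgroup.mem_centralizer_singleton_iff]

theorem cent_dihedralGroup_forty :
    (cent (DihedralGroup 40)).ncard = 22 := by
  have key : Set.ncard (cent G40) = (Finset.univ.image F).card := by
    have inj : Function.Injective ((↑) : Subgroup G40 → Set G40) := SetLike.coe_injective
    have : ((↑) : Subgroup G40 → Set G40) '' (cent G40) =
        ((↑) : Finset G40 → Set G40) '' ↑(Finset.univ.image F) := by
      unfold cent
      rw [← Set.range_comp]
      ext s
      simp only [Finset.coe_image, Finset.coe_univ, Set.image_univ, ← Set.range_comp,
        Set.mem_range, Function.comp]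
      constructor
      · rintro ⟨g, rfl⟩; exact ⟨g, (coe_F g)⟩
      · rintro ⟨g, rfl⟩; exact ⟨g, (coe_F g).symm⟩
    have h2 : Set.ncard (cent G40) = Set.ncard (((↑) : Finset G40 → Set G40) '' ↑(Finset.univ.image F)) := by
      rw [← this, Set.ncard_image_of_injective _ inj]
    rw [h2, Set.ncard_image_of_injective _ (Finset.coe_injective), Set.ncard_coe_finset]
  rw [show cent (DihedralGroup 40) = cent G40 from rfl, key]
  set_option maxRecDepth 10000 in decide
end

section
/- Let G be a group such that |cent(H)| = |cent(G)| for every subgroup H of G. Then G is abelian. -/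
theorem abelian_of_all_subgroups_same_cent_card (G : Type*) [Group G]
    (h : ∀ H : Subgroup G, (cent H).ncard = (cent G).ncard) :
    ∀ a b : G, a * b = b * a := by
  intro a b
  have h1 : (cent (⊥ : Subgroup G)).ncard = 1 := by
    have heq : cent (⊥ : Subgroup G)
        = {Subgroup.centralizer {(1 : (⊥ : Subgroup G))}} := by
      ext C
      constructor
      · rintro ⟨g, rfl⟩
        simp [Subsingleton.elim g 1]
      · rintro rfl
        exact ⟨1, rfl⟩
    rw [heq, Set.ncard_singleton]
  have h2 : (cent G).ncard = 1 := by rw [← h ⊥, h1]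
  obtain ⟨C, hC⟩ := Set.ncard_eq_one.mp h2
  have htop : Subgroup.centralizer {(1:G)} = C := by
    have hm : Subgroup.centralizer {(1:G)} ∈ cent G := ⟨1, rfl⟩
    rw [hC] at hm; exact hm
  have hb : Subgroup.centralizer {b} = C := by
    have hm : Subgroup.centralizer {b} ∈ cent G := ⟨b, rfl⟩
    rw [hC] at hm; exact hm
  have ha : a ∈ Subgroup.centralizer {b} := by
    rw [hb, ← htop]
    simp [Subgroup.mem_centralizer_iff]
  exact (Subgroup.mem_centralizer_iff.mp ha b (by simp)).symm
end

section
/- Let G be a group with cent(G) finite, and suppose that |cent(H)| = |cent(G)| for every non-abelian subgroup H of G. Then G is an AC-group, i.e. the centralizer C_G(x) is abelian for every non-central element x of G. -/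
theorem ac_group_of_nonabelian_subgroups_same_cent_card (G : Type*) [Group G]
    (hfin : (cent G).Finite)
    (h : ∀ H : Subgroup G, ¬ IsMulCommutative H → (cent H).ncard = (cent G).ncard) :
    ∀ x : G, x ∉ Subgroup.center G → IsMulCommutative (Subgroup.centralizer {x}) := by
  intro x hx
  by_contra hC
  set C : Subgroup G := Subgroup.centralizer {x} with hCdef
  have hcard := h C hC
  set f : Subgroup G → Subgroup ↥C := fun K => K.subgroupOf C with hf
  set S : Set (Subgroup G) :=
    Set.range (fun g : ↥C => Subgroup.centralizer ({(g : G)} : Set G)) with hS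
  have hS_sub : S ⊆ cent G := by
    rintro K ⟨g, rfl⟩; exact ⟨(g : G), rfl⟩
  have hSfin : S.Finite := hfin.subset hS_sub
  -- centralizers in C are images of centralizers in G
  have himg : cent ↥C = f '' S := by
    ext K
    constructor
    · rintro ⟨g, rfl⟩
      refine ⟨Subgroup.centralizer ({(g : G)} : Set G), ⟨g, rfl⟩, ?_⟩
      ext y
      simp only [hf, Subgroup.mem_subgroupOf, Subgroup.mem_centralizer_iff,
        Set.mem_singleton_iff, forall_eq]
      constructor
      · intro hy
        exact Subtype.ext_iff.mpr (by exact_mod_cast hy)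
      · intro hy
        exact_mod_cast congrArg Subtype.val hy
    · rintro ⟨K, ⟨g, rfl⟩, rfl⟩
      refine ⟨g, ?_⟩
      ext y
      simp only [hf, Subgroup.mem_subgroupOf, Subgroup.mem_centralizer_iff,
        Set.mem_singleton_iff, forall_eq]
      constructor
      · intro hy
        exact_mod_cast congrArg Subtype.val hy
      · intro hy
        exact Subtype.ext_iff.mpr (by exact_mod_cast hy)
  have h1 : (f '' S).ncard ≤ S.ncard := Set.ncard_image_le hSfin
  have h2 : S.ncard ≤ (cent G).ncard := Set.ncard_le_ncard hS_sub hfin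
  have heq : (f '' S).ncard = S.ncard := by
    have := hcard
    rw [himg] at this
    omega
  have hinj : Set.InjOn f S := Set.injOn_of_ncard_image_eq heq hSfin
  -- ⊤ ∈ S and C ∈ S, both mapping to ⊤
  have hxC : x ∈ C := Subgroup.mem_centralizer_iff.mpr (by simp)
  have htopS : (⊤ : Subgroup G) ∈ S := by
    refine ⟨(1 : ↥C), ?_⟩
    ext y; simp [Subgroup.mem_centralizer_iff]
  have hCS : C ∈ S := ⟨⟨x, hxC⟩, rfl⟩
  have hftop : f ⊤ = ⊤ := by
    ext y; simp [hf, Subgroup.mem_subgroupOf]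
  have hfC : f C = ⊤ := by
    simp [hf, Subgroup.subgroupOf_self]
  have : (⊤ : Subgroup G) = C := hinj htopS hCS (by rw [hftop, hfC])
  apply hx
  rw [Subgroup.mem_center_iff]
  intro g
  have : g ∈ C := this ▸ Subgroup.mem_top g
  exact (Subgroup.mem_centralizer_iff.mp this x rfl).symm
end

section
/- Let G be a group whose set of centralizers cent(G) is finite, and let H be any subgroup of G. Then cent(H) is finite and |cent(H)| ≤ |cent(G)|. -/
theorem cent_subgroup_finite_and_card_le (G : Type*) [Group G]
    (hfin : (cent G).Finite) (H : Subgroup G) :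
    (cent H).Finite ∧ (cent H).ncard ≤ (cent G).ncard := by
  have key : ∀ h : H, Subgroup.centralizer {h} =
      (Subgroup.centralizer {(h : G)}).comap H.subtype := by
    intro h
    ext x
    simp only [Subgroup.mem_centralizer_iff, Set.mem_singleton_iff, Subgroup.mem_comap,
      Subgroup.coe_subtype]
    constructor
    · rintro hx g rfl
      have := hx h rfl
      exact_mod_cast congrArg (Subtype.val) this
    · rintro hx g rfl
      exact Subtype.ext (hx _ rfl)
  have hsub : cent H ⊆ (fun C : Subgroup G => C.comap H.subtype) '' cent G := by
    rintro C ⟨h, rfl⟩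
    exact ⟨Subgroup.centralizer {(h : G)}, ⟨(h : G), rfl⟩, (key h).symm⟩
  have himg : ((fun C : Subgroup G => C.comap H.subtype) '' cent G).Finite := hfin.image _
  refine ⟨himg.subset hsub, ?_⟩
  calc (cent H).ncard ≤ ((fun C : Subgroup G => C.comap H.subtype) '' cent G).ncard :=
        Set.ncard_le_ncard hsub himg
    _ ≤ (cent G).ncard := Set.ncard_image_le hfin
end

section
/- Let G be a group with cent(G) finite and let H be a subgroup of G with |cent(H)| = |cent(G)|. Then H ∩ Z(G) = Z(H); that is, the intersection of H with the center of G equals the center of the group H (as subsets of G). -/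
lemma comap_centralizer_aux {G : Type*} [Group G] (H : Subgroup G) (k : H) :
    Subgroup.comap H.subtype (Subgroup.centralizer {(k : G)}) = Subgroup.centralizer {k} := by
  ext x
  simp only [Subgroup.mem_comap, Subgroup.mem_centralizer_iff, Set.mem_singleton_iff,
    forall_eq, Subgroup.coe_subtype]
  constructor
  · intro hx; exact Subtype.ext hx
  · intro hx; exact congrArg Subtype.val hx

theorem inf_center_eq_center_of_same_cent_card (G : Type*) [Group G]
    (hfin : (cent G).Finite) (H : Subgroup G)
    (h : (cent H).ncard = (cent G).ncard) :
    H ⊓ Subgroup.center G = (Subgroup.center H).map H.subtype := by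
  set S : Set (Subgroup G) := Set.range (fun k : H => Subgroup.centralizer ({(k : G)} : Set G))
    with hS
  have hSsub : S ⊆ cent G := by
    rintro _ ⟨k, rfl⟩; exact ⟨(k : G), rfl⟩
  have hSfin : S.Finite := hfin.subset hSsub
  have himg : (fun C => Subgroup.comap H.subtype C) '' S = cent H := by
    ext C
    constructor
    · rintro ⟨_, ⟨k, rfl⟩, rfl⟩
      exact ⟨k, (comap_centralizer_aux H k).symm⟩
    · rintro ⟨k, rfl⟩
      exact ⟨_, ⟨k, rfl⟩, comap_centralizer_aux H k⟩
  have hle : (cent G).ncard ≤ S.ncard := by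
    rw [← h, ← himg]
    exact Set.ncard_image_le hSfin
  have hSeq : S = cent G := Set.eq_of_subset_of_ncard_le hSsub hle hfin
  have key : ∀ g : G, ∃ k : H, Subgroup.centralizer ({(k : G)} : Set G)
      = Subgroup.centralizer ({g} : Set G) := by
    intro g
    have : Subgroup.centralizer ({g} : Set G) ∈ S := hSeq ▸ ⟨g, rfl⟩
    exact this
  ext x
  simp only [Subgroup.mem_inf, Subgroup.mem_map, Subgroup.coe_subtype]
  constructor
  · rintro ⟨hxH, hxZ⟩
    refine ⟨⟨x, hxH⟩, Subgroup.mem_center_iff.mpr fun g => ?_, rfl⟩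
    exact Subtype.ext (Subgroup.mem_center_iff.mp hxZ (g : G))
  · rintro ⟨⟨y, hyH⟩, hyZ, rfl⟩
    refine ⟨hyH, Subgroup.mem_center_iff.mpr fun g => ?_⟩
    obtain ⟨k, hk⟩ := key g
    have hcomm : (⟨y, hyH⟩ : H) ∈ Subgroup.centralizer ({k} : Set H) :=
      Subgroup.mem_centralizer_iff.mpr fun m _ => Subgroup.mem_center_iff.mp hyZ m
    have : (y : G) ∈ Subgroup.centralizer ({(k : G)} : Set G) := by
      rw [← comap_centralizer_aux H k] at hcomm
      exact hcomm
    rw [hk] at this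
    exact Subgroup.mem_centralizer_iff.mp this g rfl
end

section
/- Let G be a group with cent(G) finite and let H be a subgroup of G with |cent(H)| = |cent(G)|. Then the quotient H/Z(H) is isomorphic to HZ(G)/Z(G), and the derived subgroup of HZ(G) equals the derived subgroup of H. -/
private lemma cent_surj_of_same_card {G : Type*} [Group G]
    (hfin : (cent G).Finite) (H : Subgroup G)
    (h : (cent H).ncard = (cent G).ncard) :
    ∀ g : G, ∃ x : H, Subgroup.centralizer {(x : G)} = Subgroup.centralizer {g} := by
  set S : Set (Subgroup G) := Set.range fun x : H => Subgroup.centralizer {(x : G)} with hS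
  have hSsub : S ⊆ cent G := by
    rintro _ ⟨x, rfl⟩
    exact ⟨(x : G), rfl⟩
  have hSfin : S.Finite := hfin.subset hSsub
  -- the map C ↦ C.subgroupOf H sends S onto cent H
  have himg : cent ↥H = (fun C : Subgroup G => C.subgroupOf H) '' S := by
    ext C
    constructor
    · rintro ⟨x, rfl⟩
      refine ⟨Subgroup.centralizer {(x : G)}, ⟨x, rfl⟩, ?_⟩
      ext y
      simp [Subgroup.mem_centralizer_singleton_iff, Subgroup.mem_subgroupOf,
        ← Subtype.coe_inj]
    · rintro ⟨_, ⟨x, rfl⟩, rfl⟩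
      refine ⟨x, ?_⟩
      ext y
      simp [Subgroup.mem_centralizer_singleton_iff, Subgroup.mem_subgroupOf,
        ← Subtype.coe_inj]
  have hle : (cent G).ncard ≤ S.ncard := by
    calc (cent G).ncard = (cent ↥H).ncard := h.symm
    _ = ((fun C : Subgroup G => C.subgroupOf H) '' S).ncard := by rw [himg]
    _ ≤ S.ncard := Set.ncard_image_le hSfin
  have hSeq : S = cent G := Set.eq_of_subset_of_ncard_le hSsub hle hfin
  intro g
  have : Subgroup.centralizer {g} ∈ S := hSeq ▸ ⟨g, rfl⟩
  obtain ⟨x, hx⟩ := this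
  exact ⟨x, hx⟩

private lemma center_subgroupOf_eq {G : Type*} [Group G]
    (hfin : (cent G).Finite) (H : Subgroup G)
    (h : (cent H).ncard = (cent G).ncard) :
    (Subgroup.center G).subgroupOf H = Subgroup.center ↥H := by
  have key := cent_surj_of_same_card hfin H h
  ext z
  simp only [Subgroup.mem_subgroupOf, Subgroup.mem_center_iff]
  constructor
  · intro hz y
    have := hz (y : G)
    exact Subtype.ext this
  · intro hz g
    obtain ⟨x, hx⟩ := key g
    have hzx : (z : G) ∈ Subgroup.centralizer {(x : G)} := by
      rw [Subgroup.mem_centralizer_singleton_iff]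
      exact congrArg Subtype.val (hz x).symm
    rw [hx, Subgroup.mem_centralizer_singleton_iff] at hzx
    exact hzx.symm

open scoped Pointwise commutatorElement in
theorem isoclinic_join_center_of_same_cent_card (G : Type*) [Group G]
    (hfin : (cent G).Finite) (H : Subgroup G)
    (h : (cent H).ncard = (cent G).ncard) :
    Nonempty ((H ⧸ Subgroup.center H) ≃*
        Subgroup.map (QuotientGroup.mk' (Subgroup.center G)) (H ⊔ Subgroup.center G)) ∧
      ⁅H ⊔ Subgroup.center G, H ⊔ Subgroup.center G⁆ = ⁅H, H⁆ := by
  constructor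
  · -- isomorphism part
    set φ : ↥H →* G ⧸ Subgroup.center G :=
      (QuotientGroup.mk' (Subgroup.center G)).comp H.subtype with hφ
    have hker : φ.ker = Subgroup.center ↥H := by
      rw [hφ, ← MonoidHom.comap_ker, QuotientGroup.ker_mk',
        ← center_subgroupOf_eq hfin H h]
      rfl
    have hrange : φ.range =
        Subgroup.map (QuotientGroup.mk' (Subgroup.center G)) (H ⊔ Subgroup.center G) := by
      rw [Subgroup.map_sup]
      have h2 : Subgroup.map (QuotientGroup.mk' (Subgroup.center G)) (Subgroup.center G)
          = ⊥ := by
        rw [eq_bot_iff, Subgroup.map_le_iff_le_comap]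
        intro x hx
        simp only [Subgroup.mem_comap, Subgroup.mem_bot, ← MonoidHom.mem_ker,
          QuotientGroup.ker_mk']
        exact hx
      rw [h2, sup_bot_eq, hφ, MonoidHom.range_comp, Subgroup.range_subtype]
    exact ⟨(QuotientGroup.quotientMulEquivOfEq hker.symm).trans
      ((QuotientGroup.quotientKerEquivRange φ).trans (MulEquiv.subgroupCongr hrange))⟩
  · -- commutator part
    apply le_antisymm
    · rw [Subgroup.commutator_le]
      intro a ha b hb
      have ha' : a ∈ (H : Set G) * (Subgroup.center G : Set G) := by
        rw [← Subgroup.mul_normal]; exact ha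
      have hb' : b ∈ (H : Set G) * (Subgroup.center G : Set G) := by
        rw [← Subgroup.mul_normal]; exact hb
      obtain ⟨h₁, hh₁, z₁, hz₁, rfl⟩ := ha'
      obtain ⟨h₂, hh₂, z₂, hz₂, rfl⟩ := hb'
      have aux : ∀ a b z : G, (∀ g, z * g = g * z) → ⁅a * z, b⁆ = ⁅a, b⁆ := by
        intro a b z hz
        simp only [commutatorElement_def, mul_inv_rev]
        rw [mul_assoc a z b, hz b]
        group
      have c1 : ∀ g : G, z₁ * g = g * z₁ := fun g => (Subgroup.mem_center_iff.mp hz₁ g).symm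
      have c2 : ∀ g : G, z₂ * g = g * z₂ := fun g => (Subgroup.mem_center_iff.mp hz₂ g).symm
      have e : ⁅h₁ * z₁, h₂ * z₂⁆ = ⁅h₁, h₂⁆ := by
        rw [aux _ _ _ c1, ← inv_inv ⁅h₁, h₂ * z₂⁆, commutatorElement_inv,
          aux _ _ _ c2, ← commutatorElement_inv, inv_inv]
      rw [e]
      exact Subgroup.commutator_mem_commutator hh₁ hh₂
    · exact Subgroup.commutator_mono le_sup_left le_sup_left
end

section
/- Let G be a group with cent(G) finite and let M be a maximal subgroup of G with |cent(M)| = |cent(G)|. Then either Z(M) = Z(G) (the center of M, viewed as a subgroup of G, equals the center of G), or M is isoclinic to G; in the latter case MZ(G) = G, the derived subgroup of M equals the derived subgroup of G, and M/Z(M) ≅ G/Z(G). -/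
theorem center_eq_or_isoclinic_of_maximal_same_cent_card (G : Type*) [Group G]
    (hfin : (cent G).Finite) (M : Subgroup G) (hM : IsCoatom M)
    (h : (cent M).ncard = (cent G).ncard) :
    (Subgroup.center M).map M.subtype = Subgroup.center G ∨
      (M ⊔ Subgroup.center G = ⊤ ∧ ⁅M, M⁆ = commutator G ∧
        Nonempty ((M ⧸ Subgroup.center M) ≃* (G ⧸ Subgroup.center G))) := by
  by_cases hZ : Subgroup.center G ≤ M
  · -- left case
    left
    -- setup counting
    set φ : Subgroup G → Subgroup M := fun C => C.comap M.subtype with hφ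
    have kc : ∀ m : M, Subgroup.centralizer ({m} : Set M)
        = φ (Subgroup.centralizer {(m : G)}) := by
      intro m
      ext x
      simp only [hφ, Subgroup.mem_comap, Subgroup.mem_centralizer_iff,
        Set.mem_singleton_iff, forall_eq, Subgroup.coe_subtype]
      constructor
      · intro hx; exact_mod_cast congrArg (Subtype.val) hx
      · intro hx; exact Subtype.ext hx
    set T' : Set (Subgroup G) :=
      Set.range fun m : M => Subgroup.centralizer {(m : G)} with hT'
    have hT'sub : T' ⊆ cent G := by
      rintro C ⟨m, rfl⟩; exact ⟨(m : G), rfl⟩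
    have hT'fin : T'.Finite := hfin.subset hT'sub
    have hcentM : cent M = φ '' T' := by
      have hfe : (fun m : M => Subgroup.centralizer ({m} : Set M))
          = φ ∘ (fun m : M => Subgroup.centralizer {(m : G)}) := funext kc
      rw [cent, hfe, Set.range_comp, hT']
    have h1 : (cent M).ncard ≤ T'.ncard := by
      rw [hcentM]; exact Set.ncard_image_le hT'fin
    have h2 : T'.ncard ≤ (cent G).ncard := Set.ncard_le_ncard hT'sub hfin
    have hinj : Set.InjOn φ T' := by
      apply Set.injOn_of_ncard_image_eq _ hT'fin
      rw [← hcentM]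
      omega
    have htop_mem : (⊤ : Subgroup G) ∈ T' := by
      refine ⟨(1 : M), ?_⟩
      ext g
      simp [Subgroup.mem_centralizer_iff]
    ext x
    constructor
    · rintro hx
      obtain ⟨m, hm, rfl⟩ := hx
      have hMC : M ≤ Subgroup.centralizer {(m : G)} := by
        intro y hy
        rw [Subgroup.mem_centralizer_iff]
        rintro g rfl
        have := (Subgroup.mem_center_iff.mp hm) ⟨y, hy⟩
        simpa using congrArg Subtype.val this.symm
      have hC : Subgroup.centralizer {(m : G)} = ⊤ := by
        rcases hMC.lt_or_eq with hlt | heq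
        · exact hM.2 _ hlt
        · exfalso
          have hmem : Subgroup.centralizer {(m : G)} ∈ T' := ⟨m, rfl⟩
          have hφeq : φ (Subgroup.centralizer {(m : G)}) = φ ⊤ := by
            rw [← heq]
            simp [hφ, Subgroup.comap_subtype, Subgroup.subgroupOf_self,
              Subgroup.comap_top]
          have := hinj hmem htop_mem hφeq
          rw [← heq] at this
          exact hM.1 this
      rw [Subgroup.mem_center_iff]
      intro g
      have : g ∈ Subgroup.centralizer {(m : G)} := hC ▸ Subgroup.mem_top g
      exact (Subgroup.mem_centralizer_iff.mp this _ rfl).symm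
    · intro hx
      apply Subgroup.mem_map.mpr
      refine ⟨⟨x, hZ hx⟩, ?_, rfl⟩
      rw [Subgroup.mem_center_iff]
      intro g
      exact Subtype.ext ((Subgroup.mem_center_iff.mp hx) (g : G))
  · -- right case
    right
    have hsup : M ⊔ Subgroup.center G = ⊤ := by
      apply hM.2
      rcases lt_or_eq_of_le (le_sup_left : M ≤ M ⊔ Subgroup.center G) with hlt | heq
      · exact hlt
      · exfalso
        exact hZ (heq ▸ le_sup_right)
    -- decomposition g = m * z
    have hdecomp : ∀ g : G, ∃ m ∈ M, ∃ z ∈ Subgroup.center G, g = m * z := by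
      intro g
      have : g ∈ (↑(M ⊔ Subgroup.center G) : Set G) := by rw [hsup]; trivial
      rw [Subgroup.mul_normal] at this
      obtain ⟨m, hm, z, hz, rfl⟩ := this
      exact ⟨m, hm, z, hz, rfl⟩
    letI : Bracket G G := commutatorElement
    have keyL : ∀ (a c z : G), (∀ g : G, z * g = g * z) → ⁅a * z, c⁆ = ⁅a, c⁆ := by
      intro a c z hzc
      have e : z * c * z⁻¹ = c := by rw [hzc c]; group
      calc ⁅a * z, c⁆ = a * (z * c * z⁻¹) * a⁻¹ * c⁻¹ := by
            simp only [commutatorElement_def, mul_inv_rev]; group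
        _ = ⁅a, c⁆ := by rw [e]; simp only [commutatorElement_def]
    have keyR : ∀ (c b w : G), (∀ g : G, w * g = g * w) → ⁅c, b * w⁆ = ⁅c, b⁆ := by
      intro c b w hwc
      have e : w * c⁻¹ * w⁻¹ = c⁻¹ := by rw [hwc c⁻¹]; group
      calc ⁅c, b * w⁆ = c * b * (w * c⁻¹ * w⁻¹) * b⁻¹ := by
            simp only [commutatorElement_def, mul_inv_rev]; group
        _ = ⁅c, b⁆ := by rw [e]; simp only [commutatorElement_def]
    have hcomm : ∀ (a b z w : G), z ∈ Subgroup.center G → w ∈ Subgroup.center G →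
        ⁅a * z, b * w⁆ = ⁅a, b⁆ := by
      intro a b z w hz hw
      have hz' : ∀ g : G, z * g = g * z := fun g => ((Subgroup.mem_center_iff.mp hz) g).symm
      have hw' : ∀ g : G, w * g = g * w := fun g => ((Subgroup.mem_center_iff.mp hw) g).symm
      rw [keyR _ _ _ hw', keyL _ _ _ hz']
    constructor
    · exact hsup
    constructor
    · apply le_antisymm
      · exact Subgroup.commutator_mono le_top le_top
      · rw [commutator_def]
        rw [Subgroup.commutator_le]
        intro g1 _ g2 _
        obtain ⟨m1, hm1, z1, hz1, rfl⟩ := hdecomp g1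
        obtain ⟨m2, hm2, z2, hz2, rfl⟩ := hdecomp g2
        rw [hcomm m1 m2 z1 z2 hz1 hz2]
        exact Subgroup.commutator_mem_commutator hm1 hm2
    · -- isomorphism
      set ψ : M →* G ⧸ Subgroup.center G :=
        (QuotientGroup.mk' (Subgroup.center G)).comp M.subtype with hψ
      have hsurj : Function.Surjective ψ := by
        intro q
        obtain ⟨g, rfl⟩ := QuotientGroup.mk'_surjective (Subgroup.center G) q
        obtain ⟨m, hm, z, hz, rfl⟩ := hdecomp g
        refine ⟨⟨m, hm⟩, ?_⟩
        simp only [hψ, MonoidHom.comp_apply, Subgroup.coe_subtype]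
        rw [QuotientGroup.mk'_eq_mk']
        exact ⟨z, hz, rfl⟩
      have hker : Subgroup.center M = ψ.ker := by
        rw [hψ, ← MonoidHom.comap_ker, QuotientGroup.ker_mk']
        ext m
        simp only [Subgroup.mem_comap, Subgroup.coe_subtype]
        constructor
        · intro hm
          rw [Subgroup.mem_center_iff]
          intro g
          obtain ⟨m', hm', z, hz, rfl⟩ := hdecomp g
          have h1 : (m' : G) * m = m * m' := by
            have := (Subgroup.mem_center_iff.mp hm) ⟨m', hm'⟩
            simpa using congrArg Subtype.val this
          have h2 := Subgroup.mem_center_iff.mp hz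
          calc m' * z * (m : G) = m' * ((m : G) * z) := by rw [mul_assoc, h2 m]
            _ = (m : G) * (m' * z) := by rw [← mul_assoc, h1, mul_assoc]
        · intro hm
          rw [Subgroup.mem_center_iff]
          intro a
          exact Subtype.ext ((Subgroup.mem_center_iff.mp hm) (a : G))
      exact ⟨(QuotientGroup.quotientMulEquivOfEq hker).trans
        (QuotientGroup.quotientKerEquivOfSurjective ψ hsurj)⟩
end

section
/- Let G be a non-abelian group and H a subgroup of G such that cent(G) is finite and |cent(H)| = |cent(G)| = n with n < 6. Then HZ(G) = G, the derived subgroup of H equals the derived subgroup of G, and H/Z(H) ≅ G/Z(G); in particular H and G are isoclinic. -/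
open Subgroup Pointwise

/-- the set of proper centralizer classes -/
def Pcls (G : Type*) [Group G] : Set (Subgroup G) :=
  {C | ∃ x : G, x ∉ Subgroup.center G ∧ centralizer {x} = C}

section Helpers

variable {G : Type*} [Group G]

lemma mem_cg_iff {x y : G} : y ∈ centralizer ({x} : Set G) ↔ x * y = y * x := by
  rw [Subgroup.mem_centralizer_singleton_iff]; exact eq_comm

lemma cg_self (x : G) : x ∈ centralizer ({x} : Set G) := mem_cg_iff.mpr rfl

lemma cg_eq_top_iff {x : G} : centralizer ({x} : Set G) = ⊤ ↔ x ∈ Subgroup.center G := by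
  constructor
  · intro h
    rw [Subgroup.mem_center_iff]
    intro g
    have : g ∈ centralizer ({x} : Set G) := h ▸ Subgroup.mem_top g
    exact (mem_cg_iff.mp this).symm
  · intro h
    ext g
    simp only [Subgroup.mem_top, iff_true]
    exact mem_cg_iff.mpr ((Subgroup.mem_center_iff.mp h g)).symm

lemma cg_mul_central {x z : G} (hz : z ∈ Subgroup.center G) :
    centralizer ({x * z} : Set G) = centralizer ({x} : Set G) := by
  ext g
  simp only [mem_cg_iff]
  have := Subgroup.mem_center_iff.mp hz
  constructor
  · intro h
    have h2 : x * (z * g) = g * x * z := by rw [← mul_assoc, h]; group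
    rw [← this g, ← mul_assoc] at h2
    exact mul_right_cancel h2
  · intro h
    calc x * z * g = x * g * z := by rw [mul_assoc, ← this g, mul_assoc]
    _ = g * (x * z) := by rw [h]; group

lemma center_le_cg (x : G) : Subgroup.center G ≤ centralizer ({x} : Set G) :=
  fun z hz => mem_cg_iff.mpr (Subgroup.mem_center_iff.mp hz x)

lemma cg_abelian (hfin : (cent G).Finite) (hcard : (cent G).ncard ≤ 5)
    {x : G} (hx : x ∉ Subgroup.center G) :
    ∀ u ∈ centralizer ({x} : Set G), ∀ v ∈ centralizer ({x} : Set G), u * v = v * u := by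
  by_contra hcon
  push_neg at hcon
  obtain ⟨u, hu, v, hv, huv⟩ := hcon
  set Cx := centralizer ({x} : Set G) with hCx
  set Cu := centralizer ({u} : Set G) with hCu
  set Cv := centralizer ({v} : Set G) with hCv
  set Cw := centralizer ({u * v} : Set G) with hCw
  have hxu : x * u = u * x := mem_cg_iff.mp hu
  have hxv : x * v = v * x := mem_cg_iff.mp hv
  have hvCu : v ∉ Cu := fun h => huv (mem_cg_iff.mp h)
  have huCv : u ∉ Cv := fun h => huv (mem_cg_iff.mp h).symm
  have hvCw : v ∉ Cw := by
    intro h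
    have := mem_cg_iff.mp h
    rw [← mul_assoc] at this
    exact huv (mul_right_cancel this)
  have huCw : u ∉ Cw := by
    intro h
    have := mem_cg_iff.mp h
    rw [mul_assoc] at this
    exact huv (mul_left_cancel this).symm
  have hxCw : x ∈ Cw := by
    refine mem_cg_iff.mpr ?_
    calc u * v * x = u * (x * v) := by rw [mul_assoc, hxv]
    _ = x * (u * v) := by rw [← mul_assoc, ← hxu, mul_assoc]
  have d1 : Cx ≠ ⊤ := fun h => hx (cg_eq_top_iff.mp h)
  have d2 : Cu ≠ ⊤ := fun h => hvCu (h ▸ Subgroup.mem_top v)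
  have d3 : Cv ≠ ⊤ := fun h => huCv (h ▸ Subgroup.mem_top u)
  have d4 : Cw ≠ ⊤ := fun h => hvCw (h ▸ Subgroup.mem_top v)
  have d5 : Cx ≠ Cu := fun h => hvCu (h ▸ hv)
  have d6 : Cx ≠ Cv := fun h => huCv (h ▸ hu)
  have d7 : Cx ≠ Cw := fun h => hvCw (h ▸ hv)
  have d8 : Cu ≠ Cv := fun h => huCv (h ▸ cg_self u)
  have d9 : Cu ≠ Cw := fun h => huCw (h ▸ cg_self u)
  have d10 : Cv ≠ Cw := fun h => hvCw (h ▸ cg_self v)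
  set S : Set (Subgroup G) := insert ⊤ (insert Cx (insert Cu (insert Cv {Cw}))) with hS
  have hsub : S ⊆ cent G := by
    rintro C (rfl | rfl | rfl | rfl | rfl)
    exacts [⟨1, cg_eq_top_iff.mpr ((Subgroup.center G).one_mem)⟩, ⟨x, rfl⟩, ⟨u, rfl⟩,
      ⟨v, rfl⟩, ⟨u * v, rfl⟩]
  have f1 : ({Cw} : Set (Subgroup G)).Finite := Set.finite_singleton _
  have f2 := f1.insert Cv
  have f3 := f2.insert Cu
  have f4 := f3.insert Cx
  have hcard5 : S.ncard = 5 := by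
    rw [hS]
    rw [Set.ncard_insert_of_notMem (by simp [d1.symm, d2.symm, d3.symm, d4.symm]) f4,
      Set.ncard_insert_of_notMem (by simp [d5, d6, d7]) f3,
      Set.ncard_insert_of_notMem (by simp [d8, d9]) f2,
      Set.ncard_insert_of_notMem (by simpa using d10) f1,
      Set.ncard_singleton]
  have hSeq : S = cent G := by
    apply Set.eq_of_subset_of_ncard_le hsub _ hfin
    rw [hcard5]; exact hcard
  apply hx
  rw [Subgroup.mem_center_iff]
  intro g
  have hg : centralizer ({g} : Set G) ∈ S := hSeq.symm ▸ ⟨g, rfl⟩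
  have hxg : x ∈ centralizer ({g} : Set G) := by
    rcases hg with hg | hg | hg | hg | hg <;> rw [hg]
    · exact Subgroup.mem_top x
    · exact cg_self x
    · exact mem_cg_iff.mpr hxu.symm
    · exact mem_cg_iff.mpr hxv.symm
    · exact hxCw
  exact mem_cg_iff.mp hxg

lemma cg_eq_of_mem (hfin : (cent G).Finite) (hcard : (cent G).ncard ≤ 5)
    {x u : G} (hx : x ∉ Subgroup.center G) (hu : u ∉ Subgroup.center G)
    (hmem : u ∈ centralizer ({x} : Set G)) :
    centralizer ({u} : Set G) = centralizer ({x} : Set G) := by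
  have hxu : x ∈ centralizer ({u} : Set G) := mem_cg_iff.mpr (mem_cg_iff.mp hmem).symm
  apply le_antisymm
  · intro t ht
    exact mem_cg_iff.mpr (cg_abelian hfin hcard hu x hxu t ht)
  · intro t ht
    exact mem_cg_iff.mpr (cg_abelian hfin hcard hx u hmem t ht)

lemma cg_eq_of_inter (hfin : (cent G).Finite) (hcard : (cent G).ncard ≤ 5)
    {x y u : G} (hx : x ∉ Subgroup.center G) (hy : y ∉ Subgroup.center G)
    (hu : u ∉ Subgroup.center G) (hux : u ∈ centralizer ({x} : Set G))
    (huy : u ∈ centralizer ({y} : Set G)) :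
    centralizer ({x} : Set G) = centralizer ({y} : Set G) := by
  rw [← cg_eq_of_mem hfin hcard hx hu hux, ← cg_eq_of_mem hfin hcard hy hu huy]

lemma cent_eq_insert_top : cent G = insert ⊤ (Pcls G) := by
  ext C
  constructor
  · rintro ⟨x, rfl⟩
    by_cases hx : x ∈ Subgroup.center G
    · left; exact cg_eq_top_iff.mpr hx
    · right; exact ⟨x, hx, rfl⟩
  · rintro (rfl | ⟨x, _, rfl⟩)
    · exact ⟨1, cg_eq_top_iff.mpr ((Subgroup.center G).one_mem)⟩
    · exact ⟨x, rfl⟩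

lemma top_not_mem_Pcls : (⊤ : Subgroup G) ∉ Pcls G := by
  rintro ⟨x, hx, h⟩
  exact hx (cg_eq_top_iff.mp h)

lemma Pcls_finite (hfin : (cent G).Finite) : (Pcls G).Finite := by
  apply hfin.subset
  rw [cent_eq_insert_top]
  exact Set.subset_insert _ _

lemma cent_ncard_eq (hfin : (cent G).Finite) : (cent G).ncard = (Pcls G).ncard + 1 := by
  rw [cent_eq_insert_top, Set.ncard_insert_of_notMem top_not_mem_Pcls (Pcls_finite hfin)]

lemma centH_eq (H : Subgroup G) (h : H) :
    (centralizer ({h} : Set H) : Subgroup H) = (centralizer ({(h : G)} : Set G)).subgroupOf H := by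
  ext g
  simp only [mem_subgroupOf, mem_cg_iff]
  rw [← Subtype.coe_inj]
  push_cast
  rfl

/-- If `cent H` has the same (finite ≤ 5) cardinality as `cent G`, then every proper
centralizer class of `G` contains a noncentral element of `H`. -/
lemma meets_all (hfin : (cent G).Finite) (hcard : (cent G).ncard ≤ 5)
    {H : Subgroup G} (hHna : ¬ ∀ a b : H, a * b = b * a)
    (hH : (cent H).ncard = (cent G).ncard) :
    ∀ C ∈ Pcls G, ∃ u : G, u ∈ H ∧ u ∉ Subgroup.center G ∧ centralizer {u} = C := by
  set S : Set (Subgroup G) :=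
    {C | ∃ u : G, u ∈ H ∧ u ∉ Subgroup.center G ∧ centralizer {u} = C} with hSdef
  have hSP : S ⊆ Pcls G := by rintro C ⟨u, _, hu, h⟩; exact ⟨u, hu, h⟩
  have hSfin : S.Finite := (Pcls_finite hfin).subset hSP
  have key : cent H = insert ⊤ ((fun C => C.subgroupOf H) '' S) := by
    ext C'
    constructor
    · rintro ⟨h, rfl⟩
      by_cases hc : (h : G) ∈ Subgroup.center G
      · left
        show centralizer ({h} : Set H) = ⊤
        rw [centH_eq, cg_eq_top_iff.mpr hc]
        simp
      · right
        refine ⟨centralizer {(h : G)}, ⟨(h : G), h.2, hc, rfl⟩, ?_⟩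
        show (centralizer {(h : G)}).subgroupOf H = centralizer ({h} : Set H)
        rw [centH_eq]
    · rintro (rfl | ⟨C, ⟨u, huH, hu, rfl⟩, rfl⟩)
      · refine ⟨1, ?_⟩
        show centralizer ({1} : Set H) = ⊤
        rw [centH_eq, cg_eq_top_iff.mpr]
        · simp
        · push_cast
          exact (Subgroup.center G).one_mem
      · refine ⟨⟨u, huH⟩, ?_⟩
        show centralizer ({⟨u, huH⟩} : Set H) = (centralizer {u}).subgroupOf H
        rw [centH_eq]
  have htopnot : (⊤ : Subgroup H) ∉ (fun C => C.subgroupOf H) '' S := by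
    rintro ⟨C, ⟨u, huH, hu, rfl⟩, htop⟩
    apply hHna
    intro a b
    have hHle : H ≤ centralizer {u} := by
      rw [← Subgroup.subgroupOf_eq_top]; exact htop
    have := cg_abelian hfin hcard hu (a : G) (hHle a.2) (b : G) (hHle b.2)
    exact Subtype.ext (by push_cast; exact this)
  have hinj : Set.InjOn (fun C => C.subgroupOf H) S := by
    rintro C1 ⟨u1, hu1H, hu1, rfl⟩ C2 ⟨u2, hu2H, hu2, rfl⟩ heq
    have h1 : (⟨u1, hu1H⟩ : H) ∈ (centralizer ({u1} : Set G)).subgroupOf H := by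
      rw [mem_subgroupOf]; exact cg_self u1
    change (centralizer {u1}).subgroupOf H = (centralizer {u2}).subgroupOf H at heq
    rw [heq] at h1
    rw [mem_subgroupOf] at h1
    exact cg_eq_of_inter hfin hcard hu1 hu2 hu1 (cg_self u1) h1
  have hcount : (cent H).ncard = S.ncard + 1 := by
    rw [key, Set.ncard_insert_of_notMem htopnot (hSfin.image _),
      Set.ncard_image_of_injOn hinj]
  have hSP' : S = Pcls G := by
    apply Set.eq_of_subset_of_ncard_le hSP _ (Pcls_finite hfin)
    have := cent_ncard_eq hfin
    omega
  rw [← hSP']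
  exact fun C hC => hC

lemma Pcls_ncard_ge (hfin : (cent G).Finite) (hG : ¬ ∀ a b : G, a * b = b * a) :
    3 ≤ (Pcls G).ncard := by
  push_neg at hG
  obtain ⟨a, b, hab⟩ := hG
  have ha : a ∉ Subgroup.center G := fun h => hab (Subgroup.mem_center_iff.mp h b).symm
  have hb : b ∉ Subgroup.center G := fun h => hab (Subgroup.mem_center_iff.mp h a)
  have hc : a * b ∉ Subgroup.center G := by
    intro h
    have := Subgroup.mem_center_iff.mp h a
    rw [mul_assoc] at this
    exact hab (mul_left_cancel this)
  have hba : b ∉ centralizer ({a} : Set G) := fun h => hab (mem_cg_iff.mp h)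
  have haab : a ∉ centralizer ({a * b} : Set G) := by
    intro h
    have := mem_cg_iff.mp h
    rw [mul_assoc] at this
    exact hab (mul_left_cancel this).symm
  have hbab : b ∉ centralizer ({a * b} : Set G) := by
    intro h
    have := mem_cg_iff.mp h
    rw [← mul_assoc] at this
    exact hab (mul_right_cancel this)
  have d1 : centralizer ({a} : Set G) ≠ centralizer ({b} : Set G) :=
    fun h => hba (h ▸ cg_self b)
  have d2 : centralizer ({a} : Set G) ≠ centralizer ({a * b} : Set G) :=
    fun h => haab (h ▸ cg_self a)
  have d3 : centralizer ({b} : Set G) ≠ centralizer ({a * b} : Set G) :=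
    fun h => hbab (h ▸ cg_self b)
  have hsub : ({centralizer {a}, centralizer {b}, centralizer {a * b}} : Set (Subgroup G))
      ⊆ Pcls G := by
    rintro C (rfl | rfl | rfl)
    exacts [⟨a, ha, rfl⟩, ⟨b, hb, rfl⟩, ⟨a * b, hc, rfl⟩]
  have h3 : ({centralizer {a}, centralizer {b}, centralizer {a * b}} : Set (Subgroup G)).ncard
      = 3 := by
    rw [Set.ncard_insert_of_notMem (by simp [d1, d2]) ((Set.finite_singleton _).insert _),
      Set.ncard_pair d3]
  calc 3 = _ := h3.symm
  _ ≤ (Pcls G).ncard := Set.ncard_le_ncard hsub (Pcls_finite hfin)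

lemma ncard_biUnion_le' {α β : Type*} {k : ℕ} {s : Set α} (hs : s.Finite) {f : α → Set β}
    (h : ∀ a ∈ s, (f a).Finite ∧ (f a).ncard ≤ k) :
    (⋃ a ∈ s, f a).Finite ∧ (⋃ a ∈ s, f a).ncard ≤ s.ncard * k := by
  refine Set.Finite.induction_on (motive := fun s _ => (∀ a ∈ s, (f a).Finite ∧ (f a).ncard ≤ k) →
    (⋃ a ∈ s, f a).Finite ∧ (⋃ a ∈ s, f a).ncard ≤ s.ncard * k) s hs (by simp) ?_ h
  intro a s ha hsf ih h
  rw [Set.biUnion_insert]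
  have h1 := h a (Set.mem_insert a s)
  have ih' := ih fun b hb => h b (Set.mem_insert_of_mem a hb)
  refine ⟨h1.1.union ih'.1, ?_⟩
  rw [Set.ncard_insert_of_notMem ha hsf]
  calc (f a ∪ ⋃ x ∈ s, f x).ncard ≤ (f a).ncard + (⋃ x ∈ s, f x).ncard :=
      Set.ncard_union_le _ _
  _ ≤ k + s.ncard * k := add_le_add h1.2 ih'.2
  _ = (s.ncard + 1) * k := by ring

lemma main_contra (hfin : (cent G).Finite) (hcard : (cent G).ncard ≤ 5)
    (hG : ¬ ∀ a b : G, a * b = b * a) (A : Subgroup G)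
    (hA : ∀ C ∈ Pcls G, ∃ u : G, u ∈ A ∧ u ∉ Subgroup.center G ∧ centralizer {u} = C)
    (hAtop : A ⊔ Subgroup.center G ≠ ⊤) : False := by
  classical
  have hPfin : (Pcls G).Finite := Pcls_finite hfin
  set m := (Pcls G).ncard with hm
  have hm3 : 3 ≤ m := Pcls_ncard_ge hfin hG
  have hm4 : m ≤ 4 := by have := cent_ncard_eq hfin; omega
  set chunk : Subgroup G → Set (G ⧸ Subgroup.center G) :=
    fun C => (QuotientGroup.mk '' (C : Set G)) \ {1} with hchunk
  have hout : ∀ q : G ⧸ Subgroup.center G, (QuotientGroup.mk q.out : G ⧸ Subgroup.center G) = q :=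
    fun q => QuotientGroup.out_eq' q
  have houtZ : ∀ q : G ⧸ Subgroup.center G, q ≠ 1 → q.out ∉ Subgroup.center G := by
    intro q hq h
    apply hq
    rw [← hout q]
    exact (QuotientGroup.eq_one_iff q.out).mpr h
  have outmem : ∀ x₀ : G, ∀ q ∈ chunk (centralizer {x₀}),
      q.out ∈ centralizer ({x₀} : Set G) := by
    rintro x₀ q ⟨⟨c, hcC, hcq⟩, hq1⟩
    have heq : (QuotientGroup.mk c : G ⧸ Subgroup.center G) = QuotientGroup.mk q.out := by
      rw [hcq, hout]
    have hz : c⁻¹ * q.out ∈ Subgroup.center G := QuotientGroup.eq.mp heq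
    have h2 : q.out = c * (c⁻¹ * q.out) := by group
    rw [h2]
    exact mul_mem hcC (center_le_cg x₀ hz)
  have chunk_bound : ∀ C ∈ Pcls G, (chunk C).Finite ∧ (chunk C).ncard + 2 ≤ m := by
    intro C hC
    have hne : (Pcls G \ {C}).Nonempty := by
      apply Set.nonempty_of_ncard_ne_zero
      rw [Set.ncard_diff (by simpa using hC) (Set.finite_singleton C)]
      simp only [Set.ncard_singleton]
      omega
    obtain ⟨C', hC'mem⟩ := hne
    obtain ⟨x, hx, hxC'⟩ := hC'mem.1
    have hCC' : C' ≠ C := by simpa using hC'mem.2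
    obtain ⟨x₀, hx₀, hx₀C⟩ := hC
    subst hx₀C
    have hxnotC : x ∉ centralizer ({x₀} : Set G) := by
      intro hmem
      apply hCC'
      rw [← hxC']
      exact (cg_eq_of_inter hfin hcard hx₀ hx hx hmem (cg_self x)).symm
    have houtC : ∀ q ∈ chunk (centralizer {x₀}),
        q.out ∈ centralizer ({x₀} : Set G) ∧ q.out ∉ Subgroup.center G := by
      intro q hq
      exact ⟨outmem x₀ q hq, houtZ q hq.2⟩
    have hxgZ : ∀ q ∈ chunk (centralizer {x₀}), x * q.out ∉ Subgroup.center G := by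
      intro q hq h
      apply hxnotC
      have hxe : x = (x * q.out) * q.out⁻¹ := by group
      rw [hxe]
      exact mul_mem (center_le_cg x₀ h) (inv_mem (houtC q hq).1)
    set f : G ⧸ Subgroup.center G → Subgroup G := fun q => centralizer {x * q.out} with hf
    have hmaps : ∀ q ∈ chunk (centralizer {x₀}),
        f q ∈ Pcls G \ {centralizer ({x₀} : Set G), C'} := by
      intro q hq
      obtain ⟨hqC, hqZ⟩ := houtC q hq
      refine ⟨⟨x * q.out, hxgZ q hq, rfl⟩, ?_⟩
      simp only [Set.mem_insert_iff, Set.mem_singleton_iff, not_or]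
      constructor
      · intro h
        apply hxnotC
        have hxe : x = (x * q.out) * q.out⁻¹ := by group
        rw [hxe]
        exact mul_mem (h ▸ cg_self (x * q.out)) (inv_mem hqC)
      · intro h
        rw [← hxC'] at h
        have h1 : q.out ∈ centralizer ({x} : Set G) := by
          have hqe : q.out = x⁻¹ * (x * q.out) := by group
          rw [hqe]
          exact mul_mem (inv_mem (cg_self x)) (h ▸ cg_self (x * q.out))
        apply hCC'
        rw [← hxC']
        exact (cg_eq_of_inter hfin hcard hx₀ hx hqZ hqC h1).symm
    have hinj : Set.InjOn f (chunk (centralizer {x₀})) := by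
      intro q1 hq1 q2 hq2 h
      have h1 := houtC q1 hq1
      have h2 := houtC q2 hq2
      have hd : q1.out⁻¹ * q2.out ∈ f q1 := by
        have he : q1.out⁻¹ * q2.out = (x * q1.out)⁻¹ * (x * q2.out) := by group
        rw [he]
        exact mul_mem (inv_mem (cg_self _)) (h ▸ cg_self (x * q2.out))
      have hdC : q1.out⁻¹ * q2.out ∈ centralizer ({x₀} : Set G) :=
        mul_mem (inv_mem h1.1) h2.1
      by_cases hdZ : q1.out⁻¹ * q2.out ∈ Subgroup.center G
      · rw [← hout q1, ← hout q2]
        exact QuotientGroup.eq.mpr hdZ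
      · exfalso
        have hfeq : f q1 = centralizer ({x₀} : Set G) := by
          rw [hf]
          exact cg_eq_of_inter hfin hcard (hxgZ q1 hq1) hx₀ hdZ hd hdC
        exact ((hmaps q1 hq1).2 (by simp [hfeq]))
    have htfin : (Pcls G \ {centralizer ({x₀} : Set G), C'}).Finite := hPfin.diff
    constructor
    · exact Set.Finite.of_finite_image (htfin.subset (by
        rintro _ ⟨q, hq, rfl⟩; exact hmaps q hq)) hinj
    · have hle : (chunk (centralizer ({x₀} : Set G))).ncard
          ≤ (Pcls G \ {centralizer ({x₀} : Set G), C'}).ncard :=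
        Set.ncard_le_ncard_of_injOn f hmaps hinj htfin
      have hsubp : ({centralizer ({x₀} : Set G), C'} : Set (Subgroup G)) ⊆ Pcls G := by
        rintro K (rfl | rfl)
        · exact ⟨x₀, hx₀, rfl⟩
        · rw [← hxC']; exact ⟨x, hx, rfl⟩
      have := Set.ncard_diff_add_ncard_of_subset hsubp hPfin
      rw [Set.ncard_pair (Ne.symm hCC')] at this
      omega
  have chunk_bound' : ∀ C ∈ Pcls G, (chunk C).Finite ∧ (chunk C).ncard ≤ m - 2 := by
    intro C hC
    obtain ⟨h1, h2⟩ := chunk_bound C hC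
    exact ⟨h1, by omega⟩
  obtain ⟨hUfin, hUcard⟩ := ncard_biUnion_le' hPfin chunk_bound'
  have cover : (Set.univ : Set (G ⧸ Subgroup.center G))
      ⊆ insert 1 (⋃ C ∈ Pcls G, chunk C) := by
    intro q _
    by_cases hq : q = 1
    · exact Or.inl hq
    · right
      have hqZ := houtZ q hq
      refine Set.mem_biUnion (⟨q.out, hqZ, rfl⟩ : centralizer {q.out} ∈ Pcls G) ?_
      exact ⟨⟨q.out, cg_self q.out, hout q⟩, hq⟩
  have Qfin : (Set.univ : Set (G ⧸ Subgroup.center G)).Finite :=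
    ((hUfin.insert 1).subset cover)
  have QFinite : Finite (G ⧸ Subgroup.center G) := Set.finite_univ_iff.mp Qfin
  have cardQ : Nat.card (G ⧸ Subgroup.center G) ≤ 1 + m * (m - 2) := by
    rw [← Set.ncard_univ]
    calc (Set.univ : Set (G ⧸ Subgroup.center G)).ncard
        ≤ (insert 1 (⋃ C ∈ Pcls G, chunk C)).ncard :=
          Set.ncard_le_ncard cover (hUfin.insert 1)
      _ ≤ (⋃ C ∈ Pcls G, chunk C).ncard + 1 := Set.ncard_insert_le _ _
      _ ≤ 1 + m * (m - 2) := by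
          have hUcard' : (⋃ C ∈ Pcls G, chunk C).ncard ≤ m * (m - 2) := by
            rw [hm]; exact hUcard
          omega
  set Abar : Subgroup (G ⧸ Subgroup.center G) := A.map (QuotientGroup.mk' (Subgroup.center G))
    with hAbar
  have hAne : Abar ≠ ⊤ := by
    intro h
    apply hAtop
    rw [← QuotientGroup.ker_mk' (Subgroup.center G),
      ← Subgroup.comap_map_eq (QuotientGroup.mk' (Subgroup.center G)) A, ← hAbar, h,
      Subgroup.comap_top]
  set w : Subgroup G → G ⧸ Subgroup.center G :=
    fun C => if h : C ∈ Pcls G then QuotientGroup.mk (hA C h).choose else 1 with hw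
  have hwmaps : ∀ C ∈ Pcls G, w C ∈ (Abar : Set (G ⧸ Subgroup.center G)) \ {1} := by
    intro C hC
    obtain ⟨huA, huZ, hucg⟩ := (hA C hC).choose_spec
    constructor
    · rw [hw]
      simp only [dif_pos hC]
      exact ⟨(hA C hC).choose, huA, rfl⟩
    · rw [hw]
      simp only [dif_pos hC, Set.mem_singleton_iff]
      intro h
      exact huZ ((QuotientGroup.eq_one_iff _).mp h)
  have hwinj : Set.InjOn w (Pcls G) := by
    intro C1 hC1 C2 hC2 h
    obtain ⟨hu1A, hu1Z, hu1cg⟩ := (hA C1 hC1).choose_spec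
    obtain ⟨hu2A, hu2Z, hu2cg⟩ := (hA C2 hC2).choose_spec
    rw [hw] at h
    simp only [dif_pos hC1, dif_pos hC2] at h
    have hz : (hA C1 hC1).choose⁻¹ * (hA C2 hC2).choose ∈ Subgroup.center G :=
      QuotientGroup.eq.mp h
    have he : (hA C2 hC2).choose
        = (hA C1 hC1).choose * ((hA C1 hC1).choose⁻¹ * (hA C2 hC2).choose) := by group
    rw [← hu1cg, ← hu2cg, he, cg_mul_central hz]
  have hcardA : m + 1 ≤ Nat.card Abar := by
    have h1 : m ≤ ((Abar : Set (G ⧸ Subgroup.center G)) \ {1}).ncard :=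
      Set.ncard_le_ncard_of_injOn w hwmaps hwinj (Qfin.subset (Set.subset_univ _))
    have h2 : ((Abar : Set (G ⧸ Subgroup.center G)) \ {1}).ncard + 1
        = (Abar : Set (G ⧸ Subgroup.center G)).ncard :=
      Set.ncard_diff_singleton_add_one Abar.one_mem (Qfin.subset (Set.subset_univ _))
    have h3 : (Abar : Set (G ⧸ Subgroup.center G)).ncard = Nat.card Abar :=
      (Nat.card_coe_set_eq _).symm
    omega
  have hlag : Nat.card Abar * Abar.index = Nat.card (G ⧸ Subgroup.center G) :=
    Subgroup.card_mul_index Abar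
  have hidx1 : Abar.index ≠ 1 := fun h => hAne (Subgroup.index_eq_one.mp h)
  have hidx0 : Abar.index ≠ 0 := Subgroup.index_ne_zero_of_finite
  have hidx2 : 2 ≤ Abar.index := by omega
  have hfinal : 2 * (m + 1) ≤ Nat.card (G ⧸ Subgroup.center G) := by
    calc 2 * (m + 1) ≤ Abar.index * Nat.card Abar := Nat.mul_le_mul hidx2 hcardA
    _ = Nat.card Abar * Abar.index := Nat.mul_comm _ _
    _ = _ := hlag
  interval_cases m <;> omega

open scoped commutatorElement

lemma comm_central_left {a b z : G} (hz : z ∈ Subgroup.center G) : ⁅a * z, b⁆ = ⁅a, b⁆ := by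
  have hzc := Subgroup.mem_center_iff.mp hz
  simp only [commutatorElement_def, mul_inv_rev]
  calc a * z * b * (z⁻¹ * a⁻¹) * b⁻¹
      = a * (z * b) * z⁻¹ * a⁻¹ * b⁻¹ := by group
    _ = a * (b * z) * z⁻¹ * a⁻¹ * b⁻¹ := by rw [← hzc b]
    _ = a * b * a⁻¹ * b⁻¹ := by group

lemma comm_central_right {a b z : G} (hz : z ∈ Subgroup.center G) : ⁅a, b * z⁆ = ⁅a, b⁆ := by
  have hzc := Subgroup.mem_center_iff.mp hz
  simp only [commutatorElement_def, mul_inv_rev]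
  calc a * (b * z) * a⁻¹ * (z⁻¹ * b⁻¹)
      = a * b * (z * a⁻¹) * z⁻¹ * b⁻¹ := by group
    _ = a * b * (a⁻¹ * z) * z⁻¹ * b⁻¹ := by rw [hzc a⁻¹]
    _ = a * b * a⁻¹ * b⁻¹ := by group

end Helpers

theorem isoclinic_of_same_cent_card_lt_six (G : Type*) [Group G]
    (hG : ¬ ∀ a b : G, a * b = b * a)
    (hfin : (cent G).Finite) (H : Subgroup G) (n : ℕ) (hn : n < 6)
    (hH : (cent H).ncard = n) (hGn : (cent G).ncard = n) :
    H ⊔ Subgroup.center G = ⊤ ∧ ⁅H, H⁆ = commutator G ∧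
      Nonempty ((H ⧸ Subgroup.center H) ≃* (G ⧸ Subgroup.center G)) := by
  have hcard : (cent G).ncard ≤ 5 := by omega
  have hHna : ¬ ∀ a b : H, a * b = b * a := by
    intro habl
    have h1 : cent (H : Subgroup G) = {⊤} := by
      apply Set.eq_singleton_iff_unique_mem.mpr
      constructor
      · refine ⟨1, ?_⟩
        ext g
        simp only [Subgroup.mem_top, iff_true]
        exact mem_cg_iff.mpr (habl 1 g)
      · rintro C ⟨h, rfl⟩
        ext g
        simp only [Subgroup.mem_top, iff_true]
        exact mem_cg_iff.mpr (habl h g)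
    have h2 : n = 1 := by rw [← hH, h1, Set.ncard_singleton]
    have h3 := cent_ncard_eq hfin
    have h4 := Pcls_ncard_ge hfin hG
    omega
  have hsup : H ⊔ Subgroup.center G = ⊤ := by
    by_contra hAtop
    exact main_contra hfin hcard hG H
      (meets_all hfin hcard hHna (by rw [hH, hGn])) hAtop
  refine ⟨hsup, ?_, ?_⟩
  · rw [commutator_def]
    apply le_antisymm
    · exact Subgroup.commutator_mono le_top le_top
    · rw [Subgroup.commutator_le]
      intro g1 hg1 g2 hg2
      have hg1' : g1 ∈ ((H : Set G) * (Subgroup.center G : Set G)) := by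
        rw [← Subgroup.mul_normal, hsup]; trivial
      have hg2' : g2 ∈ ((H : Set G) * (Subgroup.center G : Set G)) := by
        rw [← Subgroup.mul_normal, hsup]; trivial
      rw [Set.mem_mul] at hg1' hg2'
      obtain ⟨h1, hh1, z1, hz1, rfl⟩ := hg1'
      obtain ⟨h2, hh2, z2, hz2, rfl⟩ := hg2'
      rw [comm_central_left hz1, comm_central_right hz2]
      exact Subgroup.commutator_mem_commutator hh1 hh2
  · set φ : H →* G ⧸ Subgroup.center G :=
      (QuotientGroup.mk' (Subgroup.center G)).comp H.subtype with hφ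
    have hsurj : Function.Surjective φ := by
      intro q
      obtain ⟨g, hgq⟩ : ∃ g : G, QuotientGroup.mk g = q := ⟨q.out, QuotientGroup.out_eq' q⟩
      have hg : g ∈ ((H : Set G) * (Subgroup.center G : Set G)) := by
        rw [← Subgroup.mul_normal, hsup]; trivial
      rw [Set.mem_mul] at hg
      obtain ⟨h, hh, z, hz, rfl⟩ := hg
      refine ⟨⟨h, hh⟩, ?_⟩
      show QuotientGroup.mk h = q
      rw [← hgq]
      exact QuotientGroup.eq.mpr (by rw [inv_mul_cancel_left]; exact hz)
    have hker : φ.ker = Subgroup.center H := by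
      ext h
      rw [MonoidHom.mem_ker]
      have hφh : φ h = QuotientGroup.mk (h : G) := rfl
      rw [hφh, QuotientGroup.eq_one_iff]
      constructor
      · intro hc
        rw [Subgroup.mem_center_iff]
        intro g
        exact Subtype.ext (by
          push_cast
          exact Subgroup.mem_center_iff.mp hc (g : G))
      · intro hc
        have hle : H ⊔ Subgroup.center G ≤ centralizer {(h : G)} := by
          apply sup_le
          · intro g hg
            refine mem_cg_iff.mpr ?_
            have h1 := Subgroup.mem_center_iff.mp hc ⟨g, hg⟩
            have h2 := congrArg (Subtype.val) h1
            push_cast at h2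
            exact h2.symm
          · exact center_le_cg _
        rw [hsup] at hle
        rw [Subgroup.mem_center_iff]
        intro g
        exact (mem_cg_iff.mp (hle (Subgroup.mem_top g))).symm
    exact ⟨(QuotientGroup.quotientMulEquivOfEq hker.symm).trans
      (QuotientGroup.quotientKerEquivOfSurjective φ hsurj)⟩
end

section
/- Let p be a prime and let G be a finite non-abelian p-group with |cent(G)| = n. Then the derived length of G is at most ⌊log_p(n−1)⌋ + 2; equivalently, the (⌊log_p(n−1)⌋ + 2)-th term of the derived series of G is trivial. -/
section Aux

variable {G : Type*} [Group G]

/-- The "center" `E ⊓ C_G(E)` of a subgroup `E`, as a subgroup of `G`, is commutative. -/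
lemma inf_centralizer_isCommutative (E : Subgroup G) :
    IsMulCommutative (↥(E ⊓ Subgroup.centralizer (E : Set G))) := by
  constructor
  constructor
  rintro ⟨a, ha⟩ ⟨b, hb⟩
  rw [Subgroup.mem_inf] at ha hb
  ext
  have := ha.2 b hb.1
  simpa using this.symm

/-- If the centralizer of `g` is `E`, then `g` lies in `E ⊓ C_G(E)`. -/
lemma mem_inf_centralizer_of_centralizer_eq {g : G} {E : Subgroup G}
    (h : Subgroup.centralizer {g} = E) :
    g ∈ E ⊓ Subgroup.centralizer (E : Set G) := by
  have hg : g ∈ Subgroup.centralizer ({g} : Set G) := by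
    rw [Subgroup.mem_centralizer_iff]
    rintro h hh
    rcases hh with rfl
    rfl
  refine Subgroup.mem_inf.mpr ⟨h ▸ hg, ?_⟩
  rw [Subgroup.mem_centralizer_iff]
  intro y hy
  have hy' : y ∈ Subgroup.centralizer ({g} : Set G) := h ▸ hy
  rw [Subgroup.mem_centralizer_iff] at hy'
  exact (hy' g rfl).symm

/-- Counting lemma: `|G| ≤ |cent G| * |A|` for `A` an abelian subgroup of maximal order. -/
lemma card_le_ncard_cent_mul [Finite G] (A : Subgroup G)
    (hAmax : ∀ B : Subgroup G, IsMulCommutative B → Nat.card B ≤ Nat.card A) :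
    Nat.card G ≤ (cent G).ncard * Nat.card A := by
  classical
  letI := Fintype.ofFinite G
  let f : G → Subgroup G := fun g => Subgroup.centralizer {g}
  have hcent : cent G = ↑(Finset.univ.image f) := by
    ext E
    simp [cent, f, eq_comm]
  have h1 : (Finset.univ : Finset G).card
      = ∑ E ∈ Finset.univ.image f, (Finset.univ.filter fun g => f g = E).card :=
    Finset.card_eq_sum_card_image f Finset.univ
  have h2 : ∀ E ∈ Finset.univ.image f,
      (Finset.univ.filter fun g => f g = E).card ≤ Nat.card A := by
    intro E _
    set Z : Subgroup G := E ⊓ Subgroup.centralizer (E : Set G) with hZ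
    have hsub : (Finset.univ.filter fun g => f g = E) ⊆ (Z : Set G).toFinset := by
      intro g hg
      rw [Finset.mem_filter] at hg
      rw [Set.mem_toFinset]
      exact mem_inf_centralizer_of_centralizer_eq hg.2
    calc (Finset.univ.filter fun g => f g = E).card ≤ (Z : Set G).toFinset.card :=
          Finset.card_le_card hsub
      _ = Nat.card Z := by
          rw [Set.toFinset_card, Nat.card_eq_fintype_card]
          rfl
      _ ≤ Nat.card A := hAmax Z (inf_centralizer_isCommutative E)
  have h3 : (Finset.univ : Finset G).card
      ≤ (Finset.univ.image f).card * Nat.card A := by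
    rw [h1]
    calc ∑ E ∈ Finset.univ.image f, (Finset.univ.filter fun g => f g = E).card
        ≤ (Finset.univ.image f).card • Nat.card A :=
          Finset.sum_le_card_nsmul _ _ _ h2
      _ = (Finset.univ.image f).card * Nat.card A := by simp
  have h4 : (cent G).ncard = (Finset.univ.image f).card := by
    rw [hcent, Set.ncard_coe_finset]
  rw [Nat.card_eq_fintype_card, h4]
  exact h3

end Aux

section MaxNormal

universe u

/-- In a finite `p`-group, every proper subgroup is contained in a normal subgroup of index `p`. -/
lemma exists_normal_index_prime {p : ℕ} (hp : p.Prime) {G : Type u} [Group G] [Finite G]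
    (hpG : IsPGroup p G) {A : Subgroup G} (hA : A ≠ ⊤) :
    ∃ M : Subgroup G, M.Normal ∧ A ≤ M ∧ M.index = p := by
  classical
  haveI : Fact p.Prime := ⟨hp⟩
  haveI : Group.IsNilpotent G := hpG.isNilpotent
  letI := Fintype.ofFinite (Subgroup G)
  let S : Finset (Subgroup G) := Finset.univ.filter fun B => A ≤ B ∧ B ≠ ⊤
  have hS : S.Nonempty := ⟨A, by simp [S, hA]⟩
  obtain ⟨M, hMS, hMmax⟩ := S.exists_max_image (fun B => Nat.card B) hS
  rw [Finset.mem_filter] at hMS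
  obtain ⟨-, hAM, hMne⟩ := hMS
  -- any strictly larger subgroup is ⊤
  have hmax' : ∀ B : Subgroup G, M < B → B = ⊤ := by
    intro B hMB
    by_contra hBne
    have hBS : B ∈ S := by
      rw [Finset.mem_filter]
      exact ⟨Finset.mem_univ _, hAM.trans hMB.le, hBne⟩
    have hle := hMmax B hBS
    have hlt : Nat.card M < Nat.card B := by
      have hss : (M : Set G) ⊂ (B : Set G) := by
        exact ⟨hMB.le, fun h => hMB.ne (le_antisymm hMB.le h)⟩
      have := Set.ncard_lt_ncard hss (Set.toFinite _)
      rw [← Nat.card_coe_set_eq, ← Nat.card_coe_set_eq] at this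
      exact this
    omega
  -- M is normal
  have hMnormal : M.Normal := by
    have h1 : M < Subgroup.normalizer (M : Set G) :=
      normalizerCondition_of_isNilpotent (G := G) M (lt_top_iff_ne_top.mpr hMne)
    exact Subgroup.normalizer_eq_top_iff.mp (hmax' _ h1)
  haveI := hMnormal
  haveI : IsPGroup p (G ⧸ M) := hpG.to_quotient M
  letI := Fintype.ofFinite (G ⧸ M)
  -- the quotient has order divisible by p
  have hcard_ne : Fintype.card (G ⧸ M) ≠ 1 := by
    intro h
    apply hMne
    have : M.index = 1 := by
      rw [Subgroup.index_eq_card, Nat.card_eq_fintype_card, h]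
    exact Subgroup.index_eq_one.mp this
  obtain ⟨t, ht⟩ := IsPGroup.iff_card.mp (hpG.to_quotient M)
  rw [Nat.card_eq_fintype_card] at ht
  have htpos : 0 < t := by
    rcases Nat.eq_zero_or_pos t with h | h
    · exfalso; apply hcard_ne; rw [ht, h, pow_zero]
    · exact h
  have hpdvd : p ∣ Fintype.card (G ⧸ M) := by
    rw [ht]
    exact dvd_pow_self p htpos.ne'
  obtain ⟨x, hx⟩ := exists_prime_orderOf_dvd_card p hpdvd
  -- the preimage of ⟨x⟩ is everything
  set K := Subgroup.comap (QuotientGroup.mk' M) (Subgroup.zpowers x) with hK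
  have hMK : M < K := by
    constructor
    · intro m hm
      have : (QuotientGroup.mk' M) m = 1 := by
        rw [← QuotientGroup.ker_mk' M] at hm
        exact hm
      show (QuotientGroup.mk' M) m ∈ Subgroup.zpowers x
      rw [this]
      exact Subgroup.one_mem _
    · intro hKM
      obtain ⟨g, hg⟩ := QuotientGroup.mk'_surjective M x
      have hgK : g ∈ K := by
        simp [K, Subgroup.mem_comap, hg, Subgroup.mem_zpowers]
      have hgM : g ∈ M := hKM hgK
      have : (QuotientGroup.mk' M) g = 1 := by
        rw [← QuotientGroup.ker_mk' M] at hgM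
        exact hgM
      rw [hg] at this
      have : orderOf x = 1 := by rw [this, orderOf_one]
      rw [hx] at this
      exact hp.one_lt.ne' this
  have hKtop : K = ⊤ := hmax' _ hMK
  have hztop : Subgroup.zpowers x = ⊤ := by
    have := Subgroup.map_comap_eq_self_of_surjective
      (f := QuotientGroup.mk' M) (QuotientGroup.mk'_surjective M) (Subgroup.zpowers x)
    rw [← this, ← hK, hKtop]
    exact Subgroup.map_top_of_surjective _ (QuotientGroup.mk'_surjective M)
  have hqcard : Nat.card (G ⧸ M) = p := by
    rw [← hx, ← Nat.card_zpowers, hztop]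
    exact (Nat.card_congr Subgroup.topEquiv.toEquiv).symm
  exact ⟨M, hMnormal, hAM, by rw [Subgroup.index_eq_card, hqcard]⟩

end MaxNormal

section Chain

universe u

open scoped commutatorElement

/-- If `M` contains the commutator subgroup, derived series of `G` drop into those of `M`. -/
lemma derivedSeries_le_map {G : Type u} [Group G] (M : Subgroup G)
    (hM : derivedSeries G 1 ≤ M) (m : ℕ) :
    derivedSeries G (m + 1) ≤ Subgroup.map M.subtype (derivedSeries M m) := by
  induction m with
  | zero =>
    have : Subgroup.map M.subtype (derivedSeries M 0) = M := by
      rw [derivedSeries_zero, ← MonoidHom.range_eq_map, Subgroup.range_subtype]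
    rw [this]
    exact hM
  | succ m ih =>
    rw [derivedSeries_succ, derivedSeries_succ (G := M), Subgroup.map_commutator]
    exact Subgroup.commutator_mono ih ih

/-- Key chain lemma: a finite `p`-group with an abelian subgroup of index `p ^ s` has
derived length at most `s + 1`. -/
lemma derivedSeries_eq_bot_of_abelian_index {p : ℕ} (hp : p.Prime) :
    ∀ (s : ℕ) (G : Type u) [Group G] [Finite G], IsPGroup p G →
      ∀ A : Subgroup G, IsMulCommutative A → A.index = p ^ s → derivedSeries G (s + 1) = ⊥ := by
  intro s
  induction s with
  | zero =>
    intro G _ _ _ A hAcomm hAidx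
    rw [pow_zero] at hAidx
    have hAtop : A = ⊤ := Subgroup.index_eq_one.mp hAidx
    rw [derivedSeries_succ, derivedSeries_zero, eq_bot_iff]
    rw [Subgroup.commutator_le]
    intro g _ h _
    rw [Subgroup.mem_bot, commutatorElement_eq_one_iff_commute]
    haveI : IsMulCommutative A := hAcomm
    have := Subgroup.mul_comm_of_mem_isMulCommutative (H := A)
      (hAtop ▸ Subgroup.mem_top g) (hAtop ▸ Subgroup.mem_top h)
    exact this
  | succ s ih =>
    intro G _ _ hpG A hAcomm hAidx
    haveI : Fact p.Prime := ⟨hp⟩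
    have hAne : A ≠ ⊤ := by
      intro h
      rw [h, Subgroup.index_top] at hAidx
      exact (Nat.one_lt_pow s.succ_ne_zero hp.one_lt).ne' hAidx.symm
    obtain ⟨M, hMnormal, hAM, hMidx⟩ := exists_normal_index_prime hp hpG hAne
    -- index of A inside M
    have hrel : A.relIndex M * M.index = A.index := Subgroup.relIndex_mul_index hAM
    have hrel' : (A.subgroupOf M).index = p ^ s := by
      have h1 : A.relIndex M = (A.subgroupOf M).index := rfl
      rw [h1, hMidx, hAidx, pow_succ] at hrel
      exact Nat.eq_of_mul_eq_mul_right hp.pos hrel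
    haveI : IsMulCommutative (A.subgroupOf M) := by
      haveI : IsMulCommutative A := hAcomm
      infer_instance
    have hMbot : derivedSeries M (s + 1) = ⊥ :=
      ih M (hpG.to_subgroup M) (A.subgroupOf M) inferInstance hrel'
    -- the commutator subgroup is contained in M
    have hcomm : derivedSeries G 1 ≤ M := by
      have hq : Nat.card (G ⧸ M) = p := by
        rw [← Subgroup.index_eq_card, hMidx]
      haveI : IsCyclic (G ⧸ M) := isCyclic_of_prime_card hq
      letI : CommGroup (G ⧸ M) := IsCyclic.commGroup
      rw [derivedSeries_succ, derivedSeries_zero, Subgroup.commutator_le]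
      intro g _ h _
      have : ((⁅g, h⁆ : G) : G ⧸ M) = 1 := by
        have : ((⁅g, h⁆ : G) : G ⧸ M) = ⁅(g : G ⧸ M), (h : G ⧸ M)⁆ := by
          simp [commutatorElement_def]
        rw [this, commutatorElement_eq_one_iff_commute]
        exact mul_comm _ _
      exact (QuotientGroup.eq_one_iff _).mp this
    have hle := derivedSeries_le_map M hcomm (s + 1)
    rw [hMbot, Subgroup.map_bot] at hle
    exact le_bot_iff.mp hle

end Chain

theorem derivedLength_le_of_pGroup (p : ℕ) (hp : p.Prime) (G : Type*) [Group G] [Finite G]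
    (hpG : IsPGroup p G) (hG : ¬ ∀ a b : G, a * b = b * a) (n : ℕ)
    (hn : (cent G).ncard = n) :
    derivedSeries G (Nat.log p (n - 1) + 2) = ⊥ := by
  classical
  haveI : Fact p.Prime := ⟨hp⟩
  -- pick an abelian subgroup of maximal order
  haveI : Finite (Subgroup G) := by
    exact Finite.of_injective (fun H : Subgroup G => (H : Set G)) SetLike.coe_injective
  letI := Fintype.ofFinite (Subgroup G)
  obtain ⟨A, hAS, hAmax⟩ := Finset.exists_max_image
    (Finset.univ.filter fun B : Subgroup G => IsMulCommutative B)
    (fun B => Nat.card B)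
    ⟨⊥, by
      rw [Finset.mem_filter]
      refine ⟨Finset.mem_univ _, ?_⟩
      constructor; constructor
      rintro ⟨a, ha⟩ ⟨b, hb⟩
      rw [Subgroup.mem_bot] at ha hb
      subst ha; subst hb; rfl⟩
  rw [Finset.mem_filter] at hAS
  have hAcomm : IsMulCommutative A := hAS.2
  have hAmax' : ∀ B : Subgroup G, IsMulCommutative B → Nat.card B ≤ Nat.card A := by
    intro B hB
    exact hAmax B (by rw [Finset.mem_filter]; exact ⟨Finset.mem_univ _, hB⟩)
  -- counting: index of A is at most n
  have hcount : Nat.card G ≤ n * Nat.card A := by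
    have := card_le_ncard_cent_mul A hAmax'
    rwa [hn] at this
  have hApos : 0 < Nat.card A := Nat.card_pos
  have hidx : A.index * Nat.card A = Nat.card G := by
    rw [mul_comm]; exact Subgroup.card_mul_index A
  have hle : A.index ≤ n := by
    have h1 : A.index * Nat.card A ≤ n * Nat.card A := by rw [hidx]; exact hcount
    exact Nat.le_of_mul_le_mul_right h1 hApos
  -- the index is a power of p
  obtain ⟨e, he⟩ := IsPGroup.iff_card.mp hpG
  have hdvd : A.index ∣ p ^ e := by
    rw [← he, ← hidx]
    exact Dvd.intro _ rfl
  obtain ⟨s, hse, hs⟩ := (Nat.dvd_prime_pow hp).mp hdvd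
  -- s ≥ 1 since G is non-abelian
  have hAne : A ≠ ⊤ := by
    intro h
    apply hG
    intro a b
    haveI : IsMulCommutative A := hAcomm
    exact Subgroup.mul_comm_of_mem_isMulCommutative (H := A)
      (h ▸ Subgroup.mem_top a) (h ▸ Subgroup.mem_top b)
  have hs1 : 1 ≤ s := by
    by_contra h
    push_neg at h
    interval_cases s
    rw [pow_zero] at hs
    exact hAne (Subgroup.index_eq_one.mp hs)
  -- derived series vanishes at s + 1
  have hd : derivedSeries G (s + 1) = ⊥ :=
    derivedSeries_eq_bot_of_abelian_index hp s G hpG A hAcomm hs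
  -- arithmetic: s - 1 ≤ log p (n - 1)
  have hps : p ^ s ≤ n := hs ▸ hle
  have hpow1 : 1 ≤ p ^ (s - 1) := Nat.one_le_pow _ _ hp.pos
  have harith : p ^ (s - 1) ≤ n - 1 := by
    have h2 : p ^ (s - 1) * p = p ^ s := by
      rw [← pow_succ]
      congr 1
      omega
    have h3 : p ^ (s - 1) * 2 ≤ p ^ (s - 1) * p :=
      Nat.mul_le_mul_left _ hp.two_le
    omega
  have hlog : s - 1 ≤ Nat.log p (n - 1) := by
    have hn1 : n - 1 ≠ 0 := by omega
    exact (Nat.le_log_iff_pow_le hp.one_lt hn1).mpr harith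
  -- conclude
  have hfin : ∀ j : ℕ, derivedSeries G (s + 1 + j) = ⊥ := by
    intro j
    induction j with
    | zero => exact hd
    | succ j ihj =>
      have : s + 1 + (j + 1) = (s + 1 + j) + 1 := by omega
      rw [this, derivedSeries_succ, ihj]
      simp
  have hkey : Nat.log p (n - 1) + 2 = s + 1 + (Nat.log p (n - 1) + 2 - (s + 1)) := by omega
  rw [hkey]
  exact hfin _
end

section
/- Let G be a finite non-abelian nilpotent group with |cent(G)| = n. Let S = {p₁, …, p_m} be the set of primes q such that the Sylow q-subgroup of G is non-abelian, and let p = min S. Then the derived length of G is at most 2 + ⌊log_p n⌋ − Σ_{q ∈ S, q ≠ p} ⌊log_p(q+1)⌋; equivalently, the term of the derived series of G at index 2 + ⌊log_p n⌋ − Σ_{q ∈ S, q ≠ p} ⌊log_p(q+1)⌋ is trivial. -/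
section Basic

variable (G : Type*) [Group G]

lemma top_mem_cent : ⊤ ∈ cent G :=
  ⟨1, by ext x; simp [Subgroup.mem_centralizer_iff]⟩

lemma cent_finite [Finite G] : (cent G).Finite := Set.finite_range _

lemma one_le_cent_ncard [Finite G] : 1 ≤ (cent G).ncard :=
  (Set.ncard_pos (cent_finite G)).mpr ⟨⊤, top_mem_cent G⟩

lemma exists_abelian_of_ncard [Finite G]
    (hG : ¬ ∀ a b : G, a * b = b * a) :
    ∃ B : Subgroup G, IsMulCommutative B ∧ B ≠ ⊤ ∧ B.index ≤ (cent G).ncard - 1 := by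
  classical
  have := Fintype.ofFinite G
  have hfin : (cent G).Finite := cent_finite G
  have hfin' : (cent G \ {⊤}).Finite := hfin.sdiff
  set PC : Finset (Subgroup G) := hfin'.toFinset with hPC
  push_neg at hG
  obtain ⟨a, b, hab⟩ := hG
  have hCa : Subgroup.centralizer {a} ∈ PC := by
    rw [hPC, Set.Finite.mem_toFinset]
    refine ⟨⟨a, rfl⟩, ?_⟩
    intro h
    rw [Set.mem_singleton_iff] at h
    have hb : b ∈ Subgroup.centralizer {a} := by rw [h]; exact Subgroup.mem_top b
    exact hab (Subgroup.mem_centralizer_iff.mp hb a rfl)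
  -- covering
  have hcov : ∀ g : G, ∃ C ∈ PC, g ∈ Subgroup.centralizer (C : Set G) := by
    intro g
    by_cases hg : ∀ x : G, g * x = x * g
    · refine ⟨Subgroup.centralizer {a}, hCa, ?_⟩
      exact Subgroup.mem_centralizer_iff.mpr fun h _ => (hg h).symm
    · push_neg at hg
      obtain ⟨x, hx⟩ := hg
      refine ⟨Subgroup.centralizer {g}, ?_, ?_⟩
      · rw [hPC, Set.Finite.mem_toFinset]
        refine ⟨⟨g, rfl⟩, ?_⟩
        intro h
        rw [Set.mem_singleton_iff] at h
        have hx' : x ∈ Subgroup.centralizer {g} := by rw [h]; exact Subgroup.mem_top x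
        exact hx (Subgroup.mem_centralizer_iff.mp hx' g rfl)
      · exact Subgroup.mem_centralizer_iff.mpr fun h hh =>
          (Subgroup.mem_centralizer_iff.mp hh g rfl).symm
  -- max
  obtain ⟨C₀, hC₀PC, hmax⟩ := PC.exists_max_image
    (fun C => Nat.card (Subgroup.centralizer (C : Set G))) ⟨_, hCa⟩
  -- counting
  have hcount : Nat.card G ≤ PC.card * Nat.card (Subgroup.centralizer ((C₀ : Subgroup G) : Set G)) := by
    rw [Nat.card_eq_fintype_card]
    calc Fintype.card G
        ≤ (PC.biUnion fun C => ((Subgroup.centralizer (C : Set G) : Set G)).toFinset).card := by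
          apply Finset.card_le_card
          intro g _
          obtain ⟨C, hC, hgC⟩ := hcov g
          exact Finset.mem_biUnion.mpr ⟨C, hC, Set.mem_toFinset.mpr hgC⟩
      _ ≤ ∑ C ∈ PC, ((Subgroup.centralizer (C : Set G) : Set G)).toFinset.card :=
          Finset.card_biUnion_le
      _ ≤ PC.card * Nat.card (Subgroup.centralizer ((C₀ : Subgroup G) : Set G)) := by
          rw [← smul_eq_mul]
          apply Finset.sum_le_card_nsmul
          intro C hC
          rw [Set.toFinset_card]
          have h1 : Fintype.card ↥((Subgroup.centralizer (C : Set G) : Set G)) =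
              Nat.card ↥(Subgroup.centralizer (C : Set G)) := by
            rw [Nat.card_eq_fintype_card]; congr 1
          rw [h1]
          exact hmax C hC
  -- conclude
  have hC₀ : C₀ ∈ cent G ∧ C₀ ≠ ⊤ := by
    have := Set.Finite.mem_toFinset hfin' |>.mp hC₀PC
    exact ⟨this.1, fun h => this.2 (Set.mem_singleton_iff.mpr h)⟩
  obtain ⟨⟨x₀, hx₀⟩, hC₀ne⟩ := hC₀
  set B : Subgroup G := Subgroup.centralizer ((C₀ : Subgroup G) : Set G) with hB
  have hBle : B ≤ C₀ := by
    rw [← hx₀]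
    apply Subgroup.centralizer_le
    intro z hz
    rw [Set.mem_singleton_iff] at hz
    subst hz
    rw [← hx₀]
    exact Subgroup.mem_centralizer_iff.mpr fun h hh => by
      rw [Set.mem_singleton_iff] at hh; rw [hh]
  refine ⟨B, ?_, ?_, ?_⟩
  · constructor
    constructor
    rintro ⟨x, hx⟩ ⟨y, hy⟩
    ext
    exact (Subgroup.mem_centralizer_iff.mp hx y (hBle hy)).symm
  · intro h
    exact hC₀ne (top_le_iff.mp (h ▸ hBle))
  · have hcard : Nat.card B * B.index = Nat.card G := Subgroup.card_mul_index B
    have hPCcard : PC.card = (cent G).ncard - 1 := by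
      rw [hPC, ← Set.ncard_eq_toFinset_card _ hfin']
      rw [Set.ncard_diff_singleton_of_mem (top_mem_cent G)]
    have hpos : 0 < Nat.card B := Nat.card_pos
    have : Nat.card B * B.index ≤ ((cent G).ncard - 1) * Nat.card B := by
      rw [hcard, ← hPCcard]; exact hcount
    rw [mul_comm ((cent G).ncard - 1) _] at this
    exact Nat.le_of_mul_le_mul_left this hpos

end Basic

section PGroup

variable {G : Type*} [Group G]

/-- Relative derived series of a subgroup, as subgroups of the ambient group. -/
def pds (B : Subgroup G) : ℕ → Subgroup G
  | 0 => B
  | n + 1 => ⁅pds B n, pds B n⁆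

lemma pds_top : ∀ n, pds (⊤ : Subgroup G) n = derivedSeries G n
  | 0 => rfl
  | n + 1 => by rw [show pds ⊤ (n+1) = ⁅pds ⊤ n, pds ⊤ n⁆ from rfl, pds_top n, derivedSeries_succ]

lemma pds_succ_le {B C : Subgroup G} (h : ⁅C, C⁆ ≤ B) : ∀ n, pds C (n + 1) ≤ pds B n
  | 0 => h
  | n + 1 => Subgroup.commutator_mono (pds_succ_le h n) (pds_succ_le h n)

lemma derivedSeries_eq_bot_mono {m k : ℕ} (h : derivedSeries G m = ⊥) (hmk : m ≤ k) :
    derivedSeries G k = ⊥ := by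
  obtain ⟨j, rfl⟩ := Nat.exists_eq_add_of_le hmk
  induction j with
  | zero => exact h
  | succ j ih =>
    rw [show m + (j+1) = (m + j) + 1 from rfl, derivedSeries_succ, ih (Nat.le_add_right m j)]
    simp

lemma pgroup_step [Finite G] {p : ℕ} (hp : p.Prime) (hpg : IsPGroup p G) :
    ∀ (k : ℕ) (B : Subgroup G) (c : ℕ), pds B c = ⊥ → B.index ∣ p ^ k →
      derivedSeries G (c + k) = ⊥ := by
  haveI := Fact.mk hp
  haveI : Group.IsNilpotent G := hpg.isNilpotent
  intro k
  induction k with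
  | zero =>
    intro B c h hd
    have hB : B = ⊤ := Subgroup.index_eq_one.mp (Nat.dvd_one.mp (by simpa using hd))
    subst hB
    rw [Nat.add_zero, ← pds_top]
    exact h
  | succ k ih =>
    intro B c h hd
    by_cases hB : B = ⊤
    · subst hB
      exact derivedSeries_eq_bot_mono (by rw [← pds_top]; exact h) (Nat.le_add_right c (k+1))
    · have hlt : B < Subgroup.normalizer (B : Set G) :=
        normalizerCondition_of_isNilpotent B (lt_top_iff_ne_top.mpr hB)
      obtain ⟨y, hyN, hyB⟩ := SetLike.exists_of_lt hlt
      set N := Subgroup.normalizer (B : Set G) with hN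
      set Bn : Subgroup ↥N := B.subgroupOf N with hBn
      haveI : Bn.Normal := Subgroup.normal_in_normalizer
      set φ := QuotientGroup.mk' Bn with hφ
      set K : Subgroup G :=
        Subgroup.map N.subtype (Subgroup.comap φ (Subgroup.zpowers (φ ⟨y, hyN⟩))) with hK
      have hBK : B ≤ K := by
        intro b hb
        refine ⟨⟨b, Subgroup.le_normalizer hb⟩, ?_, rfl⟩
        have : φ ⟨b, Subgroup.le_normalizer hb⟩ = 1 :=
          (QuotientGroup.eq_one_iff _).mpr (by simpa [hBn, Subgroup.mem_subgroupOf] using hb)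
        show φ _ ∈ Subgroup.zpowers (φ ⟨y, hyN⟩)
        rw [this]
        exact one_mem _
      have hyK : y ∈ K := ⟨⟨y, hyN⟩, Subgroup.mem_zpowers _, rfl⟩
      have hKB : ¬ K ≤ B := fun hle => hyB (hle hyK)
      have hcomm : ⁅K, K⁆ ≤ B := by
        rw [Subgroup.commutator_le]
        rintro g₁ ⟨h₁, hh₁, rfl⟩ g₂ ⟨h₂, hh₂, rfl⟩
        have hh₁' : φ h₁ ∈ Subgroup.zpowers (φ ⟨y, hyN⟩) := hh₁
        have hh₂' : φ h₂ ∈ Subgroup.zpowers (φ ⟨y, hyN⟩) := hh₂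
        have hc : Commute (φ h₁) (φ h₂) :=
          Subgroup.mul_comm_of_mem_isMulCommutative (H := Subgroup.zpowers (φ ⟨y, hyN⟩)) hh₁' hh₂'
        letI : Bracket ↥N ↥N := commutatorElement
        have h1 : φ ⁅h₁, h₂⁆ = 1 := by
          rw [map_commutatorElement]
          exact commutatorElement_eq_one_iff_commute.mpr hc
        have hk2 : ⁅h₁, h₂⁆ ∈ Bn := (QuotientGroup.eq_one_iff _).mp h1
        rw [hBn, Subgroup.mem_subgroupOf] at hk2
        exact hk2
      have h1 : B.relIndex K * K.index = B.index := Subgroup.relIndex_mul_index hBK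
      have hrdvd : B.relIndex K ∣ p ^ (k + 1) := dvd_trans ⟨K.index, h1.symm⟩ hd
      have hKdvd : K.index ∣ p ^ (k + 1) :=
        dvd_trans ⟨B.relIndex K, by rw [mul_comm]; exact h1.symm⟩ hd
      obtain ⟨j, hjle, hj⟩ := (Nat.dvd_prime_pow hp).mp hrdvd
      obtain ⟨m, hmle, hm⟩ := (Nat.dvd_prime_pow hp).mp hKdvd
      have hj1 : 1 ≤ j := by
        rcases Nat.eq_zero_or_pos j with h0 | h0
        · exfalso
          apply hKB
          apply Subgroup.relIndex_eq_one.mp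
          rw [hj, h0, pow_zero]
        · exact h0
      have hjm : p ^ (j + m) ∣ p ^ (k + 1) := by
        rw [pow_add, ← hj, ← hm, h1]
        exact hd
      have hle : j + m ≤ k + 1 := by
        have h2 : p ^ (j + m) ≤ p ^ (k + 1) :=
          Nat.le_of_dvd (Nat.pow_pos hp.pos) hjm
        exact (Nat.pow_le_pow_iff_right hp.one_lt).mp h2
      have hKd : K.index ∣ p ^ k := by
        rw [hm]
        exact pow_dvd_pow p (by omega)
      have hKds : pds K (c + 1) = ⊥ :=
        le_bot_iff.mp (le_trans (pds_succ_le hcomm c) (le_of_eq h))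
      have := ih K (c + 1) hKds hKd
      rwa [show c + 1 + k = c + (k + 1) by omega] at this

lemma pgroup_main [Finite G] {p : ℕ} (hp : p.Prime) (hpg : IsPGroup p G)
    (hna : ¬ ∀ a b : G, a * b = b * a) :
    p + 1 ≤ (cent G).ncard ∧
      derivedSeries G (1 + Nat.log p ((cent G).ncard - 1)) = ⊥ := by
  haveI := Fact.mk hp
  obtain ⟨B, hBc, hBt, hBi⟩ := exists_abelian_of_ncard G hna
  obtain ⟨mG, hmG⟩ := IsPGroup.iff_card.mp hpg
  have hdvd : B.index ∣ p ^ mG := hmG ▸ B.index_dvd_card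
  obtain ⟨k, hkle, hk⟩ := (Nat.dvd_prime_pow hp).mp hdvd
  have hk1 : 1 ≤ k := by
    rcases Nat.eq_zero_or_pos k with h0 | h0
    · exfalso
      apply hBt
      apply Subgroup.index_eq_one.mp
      rw [hk, h0, pow_zero]
    · exact h0
  have hpk : p ≤ p ^ k := by
    calc p = p ^ 1 := (pow_one p).symm
    _ ≤ p ^ k := Nat.pow_le_pow_right hp.one_lt.le hk1
  have hiB : p ^ k ≤ (cent G).ncard - 1 := hk ▸ hBi
  have hple : p ≤ (cent G).ncard - 1 := le_trans hpk hiB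
  have hn1 : (cent G).ncard - 1 ≠ 0 := by
    have := hp.two_le; omega
  constructor
  · have := hp.two_le; omega
  · have hlog : k ≤ Nat.log p ((cent G).ncard - 1) :=
      (Nat.le_log_iff_pow_le hp.one_lt hn1).mpr hiB
    have hds1 : pds B 1 = ⊥ := by
      apply le_bot_iff.mp
      rw [show pds B 1 = ⁅B, B⁆ from rfl, Subgroup.commutator_le]
      intro g₁ hg₁ g₂ hg₂
      rw [Subgroup.mem_bot]
      exact commutatorElement_eq_one_iff_commute.mpr
        (haveI := hBc; Subgroup.mul_comm_of_mem_isMulCommutative (H := B) hg₁ hg₂)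
    exact pgroup_step hp hpg _ B 1 hds1 (by rw [hk]; exact pow_dvd_pow p hlog)

end PGroup

section Pi

lemma derivedSeries_pi_eq_bot {η : Type*} (f : η → Type*) [∀ i, Group (f i)] (k : ℕ)
    (h : ∀ i, derivedSeries (f i) k = ⊥) : derivedSeries (∀ i, f i) k = ⊥ := by
  classical
  rw [eq_bot_iff]
  intro x hx
  rw [Subgroup.mem_bot]
  funext i
  have hsurj : Function.Surjective (Pi.evalMonoidHom f i) := fun y =>
    ⟨Function.update 1 i y, Function.update_self i y 1⟩
  have hmap := map_derivedSeries_eq hsurj k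
  have hxi : (Pi.evalMonoidHom f i) x ∈ derivedSeries (f i) k :=
    hmap ▸ Subgroup.mem_map_of_mem _ hx
  rw [h i, Subgroup.mem_bot] at hxi
  simpa using hxi

lemma centralizer_pi {η : Type*} (f : η → Type*) [∀ i, Group (f i)] (x : ∀ i, f i) :
    Subgroup.centralizer {x} = Subgroup.pi Set.univ fun i => Subgroup.centralizer {x i} := by
  ext y
  simp only [Subgroup.mem_centralizer_iff, Set.mem_singleton_iff, forall_eq,
    Subgroup.mem_pi, Set.mem_univ, forall_true_left]
  constructor
  · intro h i
    exact congrFun h i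
  · intro h
    funext i
    exact h i

lemma cent_pi_ncard_ge {η : Type*} [Fintype η] (f : η → Type*) [∀ i, Group (f i)]
    [∀ i, Finite (f i)] :
    ∏ i, (cent (f i)).ncard ≤ (cent (∀ i, f i)).ncard := by
  classical
  have hchoice : ∀ (c : ∀ i, {C // C ∈ cent (f i)}), ∃ x : ∀ i, f i,
      ∀ i, (c i : Subgroup (f i)) = Subgroup.centralizer {x i} := by
    intro c
    choose x hx using fun i => (c i).2
    exact ⟨x, fun i => (hx i).symm⟩
  have hF : ∀ (c : ∀ i, {C // C ∈ cent (f i)}),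
      (Subgroup.pi Set.univ fun i => (c i : Subgroup (f i))) ∈ cent (∀ i, f i) := by
    intro c
    obtain ⟨x, hx⟩ := hchoice c
    refine ⟨x, ?_⟩
    show Subgroup.centralizer {x} = _
    rw [centralizer_pi]
    congr 1
    funext i
    exact (hx i).symm
  set F : (∀ i, {C // C ∈ cent (f i)}) → {C // C ∈ cent (∀ i, f i)} :=
    fun c => ⟨_, hF c⟩ with hFdef
  have hinj : Function.Injective F := by
    intro c d hcd
    have hpi : (Subgroup.pi Set.univ fun i => (c i : Subgroup (f i))) =
        (Subgroup.pi Set.univ fun i => (d i : Subgroup (f i))) := congrArg Subtype.val hcd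
    funext i
    apply Subtype.ext
    ext g
    constructor
    · intro hg
      have := hpi ▸ (Subgroup.mulSingle_mem_pi i g).mpr (fun _ => hg)
      simpa using (Subgroup.mem_pi _).mp this i (Set.mem_univ i)
    · intro hg
      have := hpi.symm ▸ (Subgroup.mulSingle_mem_pi i g).mpr (fun _ => hg)
      simpa using (Subgroup.mem_pi _).mp this i (Set.mem_univ i)
  calc ∏ i, (cent (f i)).ncard = Nat.card (∀ i, {C // C ∈ cent (f i)}) := by
        rw [Nat.card_pi]
        exact Finset.prod_congr rfl fun i _ => (Nat.card_coe_set_eq _).symm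
    _ ≤ Nat.card {C // C ∈ cent (∀ i, f i)} := by
        haveI : Finite {C // C ∈ cent (∀ i, f i)} := (cent_finite _).to_subtype
        exact Nat.card_le_card_of_injective F hinj
    _ = (cent (∀ i, f i)).ncard := Nat.card_coe_set_eq _

end Pi

section Equiv

variable {G H : Type*} [Group G] [Group H]

lemma map_centralizer_eq (e : G ≃* H) (g : G) :
    Subgroup.map e.toMonoidHom (Subgroup.centralizer {g}) = Subgroup.centralizer {e g} := by
  ext y
  rw [Subgroup.mem_map_equiv]
  simp only [Subgroup.mem_centralizer_iff, Set.mem_singleton_iff, forall_eq]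
  constructor
  · intro h
    have := congrArg e h
    simpa using this
  · intro h
    have := congrArg e.symm h
    simpa using this

lemma cent_ncard_eq_of_equiv [Finite G] (e : G ≃* H) :
    (cent G).ncard = (cent H).ncard := by
  have himg : cent H = (Subgroup.map e.toMonoidHom) '' cent G := by
    ext C
    constructor
    · rintro ⟨h, rfl⟩
      exact ⟨Subgroup.centralizer {e.symm h}, ⟨e.symm h, rfl⟩, by
        rw [map_centralizer_eq e (e.symm h), e.apply_symm_apply]⟩
    · rintro ⟨C, ⟨g, rfl⟩, rfl⟩
      exact ⟨e g, (map_centralizer_eq e g).symm⟩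
  rw [himg, Set.ncard_image_of_injective _ (Subgroup.map_injective e.injective)]

lemma derivedSeries_eq_bot_of_equiv (e : G ≃* H) (k : ℕ)
    (h : derivedSeries G k = ⊥) : derivedSeries H k = ⊥ := by
  rw [← map_derivedSeries_eq (f := e.toMonoidHom) e.surjective k, h]
  exact Subgroup.map_bot _

end Equiv

section Arith

lemma log_add_le_log_mul {p a b : ℕ} (hp : 1 < p) (ha : a ≠ 0) (hb : b ≠ 0) :
    Nat.log p a + Nat.log p b ≤ Nat.log p (a * b) := by
  apply (Nat.le_log_iff_pow_le hp (Nat.mul_ne_zero ha hb)).mpr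
  rw [pow_add]
  exact Nat.mul_le_mul (Nat.pow_log_le_self p ha) (Nat.pow_log_le_self p hb)

lemma sum_log_le_log_prod {ι : Type*} {p : ℕ} (hp : 1 < p) (s : Finset ι) (g : ι → ℕ)
    (hg : ∀ i ∈ s, g i ≠ 0) :
    ∑ i ∈ s, Nat.log p (g i) ≤ Nat.log p (∏ i ∈ s, g i) := by
  classical
  induction s using Finset.cons_induction with
  | empty => simp
  | cons a s ha ih =>
    rw [Finset.sum_cons, Finset.prod_cons]
    calc Nat.log p (g a) + ∑ i ∈ s, Nat.log p (g i)
        ≤ Nat.log p (g a) + Nat.log p (∏ i ∈ s, g i) := by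
          exact Nat.add_le_add_left (ih fun i hi => hg i (Finset.mem_cons_of_mem hi)) _
      _ ≤ Nat.log p (g a * ∏ i ∈ s, g i) :=
          log_add_le_log_mul hp (hg a (Finset.mem_cons_self a s))
            (Finset.prod_ne_zero_iff.mpr fun i hi => hg i (Finset.mem_cons_of_mem hi))

lemma log_self_succ {p : ℕ} (hp : 2 ≤ p) : Nat.log p (p + 1) = 1 := by
  have h1 : p ^ 1 ≤ p + 1 := by simpa using Nat.le_succ p
  have h2 : p + 1 < p ^ 2 := by nlinarith
  exact Nat.log_eq_of_pow_le_of_lt_pow h1 h2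

lemma log_succ_le {p r : ℕ} (hp : 1 < p) (hr : r ≠ 0) :
    Nat.log p (r + 1) ≤ Nat.log p r + 1 := by
  have h1 : r + 1 ≤ p ^ (Nat.log p r + 1) := Nat.lt_pow_succ_log_self hp r
  have := Nat.log_mono_right (b := p) h1
  rwa [Nat.log_pow hp] at this

lemma aux_ineq {e t : ℕ} (he : 1 ≤ e) (ht : 1 ≤ t) : e + t ≤ 1 + e * t := by
  obtain ⟨a, rfl⟩ := Nat.exists_eq_add_of_le he
  obtain ⟨b, rfl⟩ := Nat.exists_eq_add_of_le ht
  have : (1 + a) * (1 + b) = 1 + a + b + a * b := by ring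
  rw [this]
  omega

end Arith

theorem derivedLength_le_of_nilpotent (G : Type*) [Group G] [Finite G]
    [Group.IsNilpotent G] (hG : ¬ ∀ a b : G, a * b = b * a) (n : ℕ)
    (hn : (cent G).ncard = n) (S : Finset ℕ)
    (hS : ∀ q : ℕ, q ∈ S ↔ q.Prime ∧ ∃ P : Sylow q G, ¬ IsMulCommutative (P : Subgroup G))
    (hSne : S.Nonempty) (p : ℕ) (hp : p = S.min' hSne) :
    derivedSeries G (2 + Nat.log p n - ∑ q ∈ S.erase p, Nat.log p (q + 1)) = ⊥ := by
  classical
  have hcard0 : Nat.card G ≠ 0 := Nat.card_pos.ne'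
  have hpS : p ∈ S := hp ▸ S.min'_mem hSne
  have hppr : p.Prime := ((hS p).mp hpS).1
  have hp2 : 2 ≤ p := hppr.two_le
  have hmin : ∀ q ∈ S, p ≤ q := fun q hq => hp ▸ S.min'_le q hq
  set L := Nat.log p n with hL
  set Sg := ∑ q ∈ S.erase p, Nat.log p (q + 1) with hSg
  have hnormal := ((isNilpotent_of_finite_tfae (G := G)).out 0 3).mp (inferInstance : Group.IsNilpotent G)
  have hnormal' : ∀ {q : ℕ} [Fact q.Prime] (P : Sylow q G), (P : Subgroup G).Normal := by
    intro q hq P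
    exact hnormal q hq P
  let e := Sylow.directProductOfNormal (G := G) hnormal'
  set ps := (Nat.card G).primeFactors with hps
  letI instF : ∀ q : ℕ, Fintype (Sylow q G) := fun _ => Fintype.ofFinite _
  have hSps : S ⊆ ps := by
    intro s hs
    obtain ⟨hspr, P, hP⟩ := (hS s).mp hs
    haveI := Fact.mk hspr
    refine Nat.mem_primeFactors.mpr ⟨hspr, ?_, hcard0⟩
    obtain ⟨k, hk⟩ := IsPGroup.iff_card.mp P.isPGroup'
    have hk0 : k ≠ 0 := by
      rintro rfl
      rw [pow_zero] at hk
      have hbot : (P : Subgroup G) = ⊥ := Subgroup.card_eq_one.mp hk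
      apply hP
      rw [hbot]
      constructor; constructor
      rintro ⟨x, hx⟩ ⟨y, hy⟩
      rw [Subgroup.mem_bot] at hx hy
      subst hx; subst hy
      rfl
    calc s ∣ s ^ k := dvd_pow_self s hk0
      _ ∣ Nat.card G := hk ▸ Subgroup.card_subgroup_dvd_card (P : Subgroup G)
  set cP : (q : ℕ) → Sylow q G → ℕ := fun q P => (cent ↥(P : Subgroup G)).ncard with hcP
  set g : ℕ → ℕ := fun q => ∏ P : Sylow q G, cP q P with hgdef
  have hcP1 : ∀ q P, 1 ≤ cP q P := fun q P => one_le_cent_ncard _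
  have hg1 : ∀ q, 1 ≤ g q := fun q => Finset.one_le_prod' fun P _ => hcP1 q P
  have h4 : ∏ r : ps, (cent (∀ P : Sylow (r : ℕ) G, ↥(P : Subgroup G))).ncard ≤ n := by
    rw [← hn, ← cent_ncard_eq_of_equiv e]
    exact cent_pi_ncard_ge _
  have hprod_le_n : ∏ r ∈ ps, g r ≤ n := by
    rw [← Finset.prod_coe_sort ps g]
    refine le_trans (Finset.prod_le_prod' fun r _ => ?_) h4
    exact cent_pi_ncard_ge _
  have hna_ge : ∀ (q : ℕ), q.Prime → ∀ (P : Sylow q G), ¬ IsMulCommutative (P : Subgroup G) →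
      q + 1 ≤ cP q P ∧
        derivedSeries ↥(P : Subgroup G) (1 + Nat.log q (cP q P - 1)) = ⊥ := by
    intro q hq P hP
    have hna' : ¬ ∀ a b : ↥(P : Subgroup G), a * b = b * a := by
      intro h; exact hP ⟨⟨fun a b => h a b⟩⟩
    exact pgroup_main hq P.isPGroup' hna'
  have hmaster : ∀ h : ℕ → ℕ, (∀ s ∈ S, 1 ≤ h s ∧ ∃ P : Sylow s G, h s ≤ cP s P) →
      ∑ s ∈ S, Nat.log p (h s) ≤ L := by
    intro h hh
    have h1 : ∑ s ∈ S, Nat.log p (h s) ≤ Nat.log p (∏ s ∈ S, h s) :=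
      sum_log_le_log_prod hppr.one_lt S h fun s hs => Nat.one_le_iff_ne_zero.mp (hh s hs).1
    have h2 : ∏ s ∈ S, h s ≤ ∏ s ∈ S, g s := by
      refine Finset.prod_le_prod' fun s hs => ?_
      obtain ⟨_, P, hP⟩ := hh s hs
      exact le_trans hP (Finset.single_le_prod' (fun Q _ => hcP1 s Q) (Finset.mem_univ P))
    have h3 : ∏ s ∈ S, g s ≤ ∏ r ∈ ps, g r :=
      Finset.prod_le_prod_of_subset_of_one_le' hSps fun r _ _ => hg1 r
    exact le_trans h1 (Nat.log_mono_right (le_trans h2 (le_trans h3 hprod_le_n)))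
  have hSgL : Sg ≤ L := by
    have hcond : ∀ s ∈ S, 1 ≤ s + 1 ∧ ∃ P : Sylow s G, s + 1 ≤ cP s P := by
      intro s hs
      obtain ⟨hspr, P, hP⟩ := (hS s).mp hs
      exact ⟨Nat.le_add_left 1 s, P, (hna_ge s hspr P hP).1⟩
    have := hmaster (fun s => s + 1) hcond
    calc Sg ≤ ∑ s ∈ S, Nat.log p (s + 1) :=
          Finset.sum_le_sum_of_subset (Finset.erase_subset p S)
      _ ≤ L := this
  set T := 2 + L - Sg with hT
  have hT1 : 1 ≤ T := by omega
  have key : ∀ r ∈ ps, ∀ P' : Sylow r G, derivedSeries ↥(P' : Subgroup G) T = ⊥ := by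
    intro r hr P'
    have hrpr : r.Prime := Nat.prime_of_mem_primeFactors hr
    by_cases hab : IsMulCommutative (P' : Subgroup G)
    · have h1 : derivedSeries ↥(P' : Subgroup G) 1 = ⊥ := by
        apply le_bot_iff.mp
        rw [derivedSeries_succ, derivedSeries_zero, Subgroup.commutator_le]
        intro g₁ _ g₂ _
        rw [Subgroup.mem_bot]
        exact commutatorElement_eq_one_iff_commute.mpr (hab.is_comm.comm g₁ g₂)
      exact derivedSeries_eq_bot_mono h1 hT1
    · have hrS : r ∈ S := (hS r).mpr ⟨hrpr, P', hab⟩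
      obtain ⟨hge, hds⟩ := hna_ge r hrpr P' hab
      set n' := cP r P' with hn'
      set l' := Nat.log r (n' - 1) with hl'
      set hfun : ℕ → ℕ := Function.update (fun s => s + 1) r n' with hfundef
      have hcond : ∀ s ∈ S, 1 ≤ hfun s ∧ ∃ P : Sylow s G, hfun s ≤ cP s P := by
        intro s hs
        by_cases hsr : s = r
        · subst hsr
          rw [hfundef, Function.update_self]
          exact ⟨by omega, P', le_refl _⟩
        · rw [hfundef, Function.update_of_ne hsr]
          obtain ⟨hspr, P, hP⟩ := (hS s).mp hs
          exact ⟨by omega, P, (hna_ge s hspr P hP).1⟩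
      have hsum := hmaster hfun hcond
      have hmain : 1 + l' + Sg ≤ 2 + L := by
        by_cases hrp : r = p
        · subst hrp
          rw [← Finset.add_sum_erase S _ hrS] at hsum
          have e2 : hfun r = n' := by rw [hfundef]; simp
          have hrest : ∑ s ∈ S.erase r, Nat.log r (hfun s) = Sg := by
            apply Finset.sum_congr rfl
            intro s hs
            rw [hfundef, Function.update_of_ne (Finset.ne_of_mem_erase hs)]
          rw [e2, hrest] at hsum
          have hmono : l' ≤ Nat.log r n' := Nat.log_mono_right (Nat.sub_le n' 1)
          omega
        · have hrSe : r ∈ S.erase p := Finset.mem_erase.mpr ⟨hrp, hrS⟩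
          rw [← Finset.add_sum_erase S _ hpS, ← Finset.add_sum_erase _ _ hrSe] at hsum
          have e1 : hfun p = p + 1 := by
            rw [hfundef, Function.update_of_ne (fun h => hrp h.symm)]
          have e2 : hfun r = n' := by rw [hfundef]; simp
          have hrest : ∑ s ∈ (S.erase p).erase r, Nat.log p (hfun s)
              = ∑ s ∈ (S.erase p).erase r, Nat.log p (s + 1) := by
            apply Finset.sum_congr rfl
            intro s hs
            rw [hfundef, Function.update_of_ne (Finset.ne_of_mem_erase hs)]
          rw [e1, e2, hrest, log_self_succ hp2] at hsum
          have hSgsplit : Sg = Nat.log p (r + 1) + ∑ s ∈ (S.erase p).erase r, Nat.log p (s + 1) :=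
            (Finset.add_sum_erase _ _ hrSe).symm
          have hrge : p + 1 ≤ r := by
            have := hmin r hrS
            rcases lt_or_eq_of_le this with h | h
            · omega
            · exact absurd h.symm hrp
          have hr0 : r ≠ 0 := hrpr.pos.ne'
          set t := Nat.log p r with htdef
          have ht1 : 1 ≤ t := by
            apply (Nat.le_log_iff_pow_le hppr.one_lt hr0).mpr
            simpa using (by omega : p ≤ r)
          have hn'3 : r ≤ n' - 1 := by omega
          have hn10 : n' - 1 ≠ 0 := by
            have := hrpr.pos; omega
          have hl'1 : 1 ≤ l' := by
            rw [hl']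
            apply (Nat.le_log_iff_pow_le hrpr.one_lt hn10).mpr
            simpa using hn'3
          have hlogr1 : Nat.log p (r + 1) ≤ t + 1 := log_succ_le hppr.one_lt hr0
          have hn'pos : n' ≠ 0 := by omega
          have hml : l' * t ≤ Nat.log p n' := by
            apply (Nat.le_log_iff_pow_le hppr.one_lt hn'pos).mpr
            calc p ^ (l' * t) = (p ^ t) ^ l' := by rw [← pow_mul, mul_comm]
              _ ≤ r ^ l' := Nat.pow_le_pow_left (Nat.pow_log_le_self p hr0) l'
              _ ≤ n' - 1 := by rw [hl']; exact Nat.pow_log_le_self r hn10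
              _ ≤ n' := Nat.sub_le n' 1
          have haux := aux_ineq hl'1 ht1
          generalize hM : l' * t = M at haux hml
          omega
      exact derivedSeries_eq_bot_mono hds (by omega)
  apply derivedSeries_eq_bot_of_equiv e T
  apply derivedSeries_pi_eq_bot
  intro r
  apply derivedSeries_pi_eq_bot
  intro P'
  exact key (r : ℕ) r.2 P'
end
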